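/- arXiv:2604.15803 — 3 statements merged into one kernel-verified Lean document; each statement's English description precedes it below -/
import Mathlib

section
/- Let G be a countable discrete group and H ≤ G a subgroup, and suppose there exist C_h > 0 and w : G → [1,∞) such that ‖f‖_{h,(G,H)} ≤ C_h‖f·w‖_{(2,1),(G,H)} for every finitely supported f : G → ℂ. Let K ≤ G be a subgroup and set L = K ∩ H. Then ‖f‖_{h,(K,L)} ≤ C_h‖f·(w|_K)‖_{(2,1),(K,L)} for every finitely supported f : K → ℂ. Moreover, if G is generated by a finite symmetric set with word length ℓ, the radial majorant W(t) = sup{w(g) : ℓ(g) ≤ t} is subexponential (log W(t)/t → 0), and K is generated by a finite symmetric set with word length ℓ_K, then (K,L) ∈ SLC_subexp with respect to ℓ_K. -/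
open scoped ENNReal
open Filter Topology

noncomputable section

namespace PaperRD

variable {G : Type*} [Group G]

/-- The fiber summation (push-forward) `π_# f` of a real-valued function on `G`
along the projection `G → G ⧸ H` onto the space of left cosets. -/
def fiberSum (H : Subgroup G) (f : G → ℝ) (x : G ⧸ H) : ℝ :=
  ∑' g : {g : G // (QuotientGroup.mk g : G ⧸ H) = x}, f (g : G)

/-- The `ℓ^q`-norm (valued in `ℝ≥0∞`) of a function on a type. -/
def lqNorm {X : Type*} {E : Type*} [Norm E] (q : ℝ) (ξ : X → E) : ℝ≥0∞ :=
  (∑' x : X, ENNReal.ofReal ‖ξ x‖ ^ q) ^ (1 / q)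

/-- The quasi-regular convolution operator `λ_X(f)` acting on functions on `G ⧸ H`:
`(λ_X(f)ξ)(x) = ∑_{g ∈ G} f(g) ξ(g⁻¹ x)`. -/
def lam (H : Subgroup G) (f : G → ℂ) (ξ : G ⧸ H → ℂ) (x : G ⧸ H) : ℂ :=
  ∑' g : G, f g * ξ ((g⁻¹ : G) • x)

/-- Operator norm (in `ℝ≥0∞`) of a map on functions, with respect to the `ℓ^q` norms:
the supremum of `‖Tξ‖_q` over the unit ball. -/
def opNorm {X : Type*} (q : ℝ) (T : (X → ℂ) → (X → ℂ)) : ℝ≥0∞ :=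
  ⨆ ξ : {ξ : X → ℂ // lqNorm q ξ ≤ 1}, lqNorm q (T (ξ : X → ℂ))

/-- The spectral radius `r_q(μ) = lim_n ‖T_q^n‖^{1/n}`; since the sequence of norms is
submultiplicative the limit exists and equals `inf_n ‖T_q^n‖^{1/n}`, which we take as
the definition. -/
def specRad (H : Subgroup G) (μ : G → ℝ) (q : ℝ) : ℝ :=
  (⨅ n : ℕ, opNorm q ((lam H (fun g => (μ g : ℂ)))^[n + 1]) ^ (1 / (n + 1 : ℝ))).toReal

/-- `c(G,H;μ) = sup_{p ∈ [2,∞)} ( -p · log r_{p/(p-1)}(μ) )`. -/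
def cval (H : Subgroup G) (μ : G → ℝ) : ℝ :=
  sSup {y : ℝ | ∃ p : ℝ, 2 ≤ p ∧ y = -p * Real.log (specRad H μ (p / (p - 1)))}

/-- Convolution of real functions on `G`. -/
def conv (f φ : G → ℝ) (g : G) : ℝ :=
  ∑' y : G, f y * φ (y⁻¹ * g)

open scoped Classical in
/-- Convolution powers `μ^{*n}` (with `μ^{*0} = δ_e`). -/
def convPow (μ : G → ℝ) : ℕ → G → ℝ
  | 0 => fun g => if g = 1 then 1 else 0
  | n + 1 => conv μ (convPow μ n)

/-- `ν_n = π_#(μ^{*n}) = μ^{*n} * δ_{eH}`, the distribution at time `n` of the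
`μ`-random walk on `G ⧸ H` started at the base coset. -/
def walkDist (H : Subgroup G) (μ : G → ℝ) (n : ℕ) : G ⧸ H → ℝ :=
  fiberSum H (convPow μ n)

/-- Shannon entropy `H(ν) = -∑ ν log ν` (with the convention `0 log 0 = 0`,
automatic since `Real.log 0 = 0`). -/
def shannon {X : Type*} (ν : X → ℝ) : ℝ :=
  -∑' x : X, ν x * Real.log (ν x)

/-- Rényi entropy of order `α`: `H_α(ν) = (1/(1-α)) log ∑ ν(x)^α`. -/
def renyi {X : Type*} (α : ℝ) (ν : X → ℝ) : ℝ :=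
  (1 / (1 - α)) * Real.log (∑' x : X, ν x ^ α)

/-- Word length with respect to a generating set `S`. -/
def wordLength (S : Set G) (g : G) : ℕ :=
  sInf {n : ℕ | ∃ l : List G, (∀ s ∈ l, s ∈ S) ∧ l.length = n ∧ l.prod = g}

/-- The mixed `(2,1)`-norm of a function on `G` relative to the pair `(G,H)`:
`‖f‖_{(2,1)} = ( ∑_{x ∈ G/H} ( ∑_{g ∈ x} |f(g)| )² )^{1/2}`. -/
def norm21 (H : Subgroup G) (f : G → ℂ) : ℝ :=
  Real.sqrt (∑' x : G ⧸ H,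
    (∑' g : {g : G // (QuotientGroup.mk g : G ⧸ H) = x}, ‖f (g : G)‖) ^ 2)

/-- Convolution of complex functions on `G`. -/
def convC (f φ : G → ℂ) (g : G) : ℂ :=
  ∑' y : G, f y * φ (y⁻¹ * g)

/-- The Haagerup-type norm `‖f‖_h` for the pair `(G,H)`:
the supremum of `‖f ∗ φ‖_{(2,1)}` over finitely supported nonnegative `φ` with
`‖φ‖_{(2,1)} ≤ 1`. -/
def hNorm (H : Subgroup G) (f : G → ℂ) : ℝ :=
  sSup {r : ℝ | ∃ φ : G → ℝ, (Function.support φ).Finite ∧ (∀ y, 0 ≤ φ y) ∧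
    norm21 H (fun g => (φ g : ℂ)) ≤ 1 ∧
    r = norm21 H (convC f (fun g => (φ g : ℂ)))}

/-- The pair `(G,H)` has pair rapid decay w.r.t. the length `ℓ`, with exponent `s`. -/
def HasPairRDWith (H : Subgroup G) (ℓ : G → ℕ) (s : ℝ) : Prop :=
  ∃ C : ℝ, 0 < C ∧ ∀ f : G → ℂ, (Function.support f).Finite →
    hNorm H f ≤ C * norm21 H (fun g => f g * (((1 + (ℓ g : ℝ)) ^ s : ℝ) : ℂ))

/-- The pair `(G,H)` has pair rapid decay w.r.t. the length `ℓ`. -/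
def HasPairRD (H : Subgroup G) (ℓ : G → ℕ) : Prop :=
  ∃ s : ℝ, 0 < s ∧ HasPairRDWith H ℓ s

/-- Radial majorant `W(t) = sup { w(g) : ℓ(g) ≤ t }` of a weight `w`. -/
def radialMaj (ℓ : G → ℕ) (w : G → ℝ) (t : ℕ) : ℝ :=
  sSup (w '' {g : G | ℓ g ≤ t})

/-- The pair `(G,H)` satisfies subexponential Lorentz control (`SLC_subexp`)
w.r.t. the length `ℓ`: there is a weight `w ≥ 1` with `‖f‖_h ≤ C ‖f·w‖_{(2,1)}`
for all finitely supported `f`, whose radial majorant `W` satisfies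
`log W(t) / t → 0`. -/
def SLCsubexp (H : Subgroup G) (ℓ : G → ℕ) : Prop :=
  ∃ C : ℝ, 0 < C ∧ ∃ w : G → ℝ, (∀ g, 1 ≤ w g) ∧
    (∀ f : G → ℂ, (Function.support f).Finite →
      hNorm H f ≤ C * norm21 H (fun g => f g * (w g : ℂ))) ∧
    Tendsto (fun t : ℕ => Real.log (radialMaj ℓ w t) / (t : ℝ)) atTop (𝓝 0)

end PaperRD

namespace Statement14Aux
open PaperRD
open scoped Classical

variable {G : Type*} [Group G]

/-! ### Extension by zero to a subgroup -/

def ext (K : Subgroup G) {E : Type*} [Zero E] (f : K → E) : G → E :=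
  fun g => if h : g ∈ K then f ⟨g, h⟩ else 0

lemma ext_coe (K : Subgroup G) {E : Type*} [Zero E] (f : K → E) (k : K) :
    ext K f (k : G) = f k := by simp [ext]

lemma ext_of_not_mem (K : Subgroup G) {E : Type*} [Zero E] (f : K → E) {g : G} (hg : g ∉ K) :
    ext K f g = 0 := by simp [ext, hg]

lemma mem_of_ext_ne_zero (K : Subgroup G) {E : Type*} [Zero E] {f : K → E} {g : G}
    (h : ext K f g ≠ 0) : g ∈ K := by
  by_contra hg; exact h (ext_of_not_mem K f hg)

lemma ext_supp_fin (K : Subgroup G) {E : Type*} [Zero E] {f : K → E}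
    (hf : (Function.support f).Finite) : (Function.support (ext K f)).Finite := by
  refine (hf.image Subtype.val).subset ?_
  intro g hg
  simp only [Function.mem_support] at hg
  have hk : g ∈ K := mem_of_ext_ne_zero K hg
  refine ⟨⟨g, hk⟩, ?_, rfl⟩
  rw [Function.mem_support, ← ext_coe K f ⟨g, hk⟩]
  exact hg

/-! ### Fiber sums and the `(2,1)` norm -/

def fib (H : Subgroup G) (ψ : G → ℂ) (x : G ⧸ H) : ℝ :=
  ∑' g : {g : G // (QuotientGroup.mk g : G ⧸ H) = x}, ‖ψ (g : G)‖

lemma norm21_eq (H : Subgroup G) (ψ : G → ℂ) :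
    norm21 H ψ = Real.sqrt (∑' x : G ⧸ H, fib H ψ x ^ 2) := rfl

lemma norm21_nonneg (H : Subgroup G) (ψ : G → ℂ) : 0 ≤ norm21 H ψ := Real.sqrt_nonneg _

lemma summable_of_fin_supp {β : Type*} (f : β → ℝ) (hf : (Function.support f).Finite) :
    Summable f := by
  apply summable_of_ne_finset_zero (s := hf.toFinset)
  intro b hb
  by_contra h
  exact hb (hf.mem_toFinset.mpr h)

lemma fib_nonneg (H : Subgroup G) (ψ : G → ℂ) (x : G ⧸ H) : 0 ≤ fib H ψ x :=
  tsum_nonneg fun _ => norm_nonneg _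

lemma fib_inner_supp_fin (H : Subgroup G) (ψ : G → ℂ) (hψ : (Function.support ψ).Finite)
    (x : G ⧸ H) :
    (Function.support
      (fun g : {g : G // (QuotientGroup.mk g : G ⧸ H) = x} => ‖ψ (g : G)‖)).Finite := by
  have hsub : (Function.support
      (fun g : {g : G // (QuotientGroup.mk g : G ⧸ H) = x} => ‖ψ (g : G)‖))
      ⊆ Subtype.val ⁻¹' (Function.support ψ) := by
    intro g hg
    simp only [Function.mem_support] at hg
    exact fun h => hg (by simp [h])
  exact ((hψ.preimage (Subtype.val_injective.injOn)).subset hsub)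

lemma summable_fib_inner (H : Subgroup G) (ψ : G → ℂ) (hψ : (Function.support ψ).Finite)
    (x : G ⧸ H) :
    Summable (fun g : {g : G // (QuotientGroup.mk g : G ⧸ H) = x} => ‖ψ (g : G)‖) :=
  summable_of_fin_supp _ (fib_inner_supp_fin H ψ hψ x)

lemma fib_supp_fin (H : Subgroup G) (ψ : G → ℂ) (hψ : (Function.support ψ).Finite) :
    (Function.support (fib H ψ)).Finite := by
  have hsub : Function.support (fib H ψ) ⊆ QuotientGroup.mk '' (Function.support ψ) := by
    intro x hx
    by_contra hmem
    apply hx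
    have hz : ∀ g : {g : G // (QuotientGroup.mk g : G ⧸ H) = x}, ‖ψ (g : G)‖ = 0 := by
      rintro ⟨g, hg⟩
      by_contra h
      exact hmem ⟨g, by simpa [Function.mem_support, norm_eq_zero] using h, hg⟩
    show fib H ψ x = 0
    unfold fib
    rw [tsum_congr hz, tsum_zero]
  exact (hψ.image _).subset hsub

lemma fib_sq_supp_fin (H : Subgroup G) (ψ : G → ℂ) (hψ : (Function.support ψ).Finite) :
    (Function.support (fun x => fib H ψ x ^ 2)).Finite := by
  refine (fib_supp_fin H ψ hψ).subset ?_
  intro x hx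
  simp only [Function.mem_support] at hx ⊢
  exact fun h => hx (by rw [h]; ring)

/-! ### Invariance properties of the `(2,1)` norm -/

lemma smul_mk' (H : Subgroup G) (y g : G) :
    (y • (QuotientGroup.mk g : G ⧸ H)) = QuotientGroup.mk (y * g) := rfl

lemma fib_translate (H : Subgroup G) (ψ : G → ℂ) (y : G) (x : G ⧸ H) :
    fib H (fun g => ψ (y⁻¹ * g)) x = fib H ψ (y⁻¹ • x) := by
  unfold fib
  have hmk : ∀ h : G, (QuotientGroup.mk h : G ⧸ H) = y⁻¹ • x →
      (QuotientGroup.mk (y * h) : G ⧸ H) = x := by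
    intro h hh
    rw [← smul_mk' H y h, hh, smul_smul, mul_inv_cancel, one_smul]
  have hmk2 : ∀ g : G, (QuotientGroup.mk g : G ⧸ H) = x →
      (QuotientGroup.mk (y⁻¹ * g) : G ⧸ H) = y⁻¹ • x := by
    intro g hg
    rw [← smul_mk' H y⁻¹ g, hg]
  let e : {h : G // (QuotientGroup.mk h : G ⧸ H) = y⁻¹ • x} ≃
      {g : G // (QuotientGroup.mk g : G ⧸ H) = x} :=
    { toFun := fun h => ⟨y * (h : G), hmk _ h.2⟩
      invFun := fun g => ⟨y⁻¹ * (g : G), hmk2 _ g.2⟩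
      left_inv := fun h => Subtype.ext (by simp)
      right_inv := fun g => Subtype.ext (by simp) }
  rw [← Equiv.tsum_eq e (fun g => ‖ψ (y⁻¹ * (g : G))‖)]
  apply tsum_congr
  intro h
  simp [e]

lemma norm21_translate (H : Subgroup G) (ψ : G → ℂ) (y : G) :
    norm21 H (fun g => ψ (y⁻¹ * g)) = norm21 H ψ := by
  rw [norm21_eq, norm21_eq]
  congr 1
  have hcongr : ∀ x : G ⧸ H, fib H (fun g => ψ (y⁻¹ * g)) x ^ 2 = fib H ψ (y⁻¹ • x) ^ 2 := by
    intro x; rw [fib_translate]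
  rw [tsum_congr hcongr]
  exact Equiv.tsum_eq (MulAction.toPerm (y⁻¹ : G)) (fun x => fib H ψ x ^ 2)

lemma norm21_smul (H : Subgroup G) (ψ : G → ℂ) (c : ℂ) :
    norm21 H (fun g => c * ψ g) = ‖c‖ * norm21 H ψ := by
  rw [norm21_eq, norm21_eq]
  have h1 : ∀ x : G ⧸ H, fib H (fun g => c * ψ g) x = ‖c‖ * fib H ψ x := by
    intro x
    unfold fib
    rw [← tsum_mul_left]
    exact tsum_congr fun g => norm_mul c (ψ g)
  have h2 : ∀ x : G ⧸ H, fib H (fun g => c * ψ g) x ^ 2 = ‖c‖ ^ 2 * fib H ψ x ^ 2 := by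
    intro x; rw [h1]; ring
  rw [tsum_congr h2, tsum_mul_left, Real.sqrt_mul (sq_nonneg _), Real.sqrt_sq (norm_nonneg c)]

lemma minkowski {X : Type*} (a b : X → ℝ) (ha : (Function.support a).Finite)
    (hb : (Function.support b).Finite) :
    Real.sqrt (∑' x, (a x + b x) ^ 2) ≤
      Real.sqrt (∑' x, a x ^ 2) + Real.sqrt (∑' x, b x ^ 2) := by
  classical
  set s : Finset X := (ha.union hb).toFinset with hs
  have hamem : ∀ x ∉ s, a x = 0 := by
    intro x hx
    by_contra h
    exact hx (by simp [hs, Set.Finite.mem_toFinset, Function.mem_support, h])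
  have hbmem : ∀ x ∉ s, b x = 0 := by
    intro x hx
    by_contra h
    exact hx (by simp [hs, Set.Finite.mem_toFinset, Function.mem_support, h])
  rw [tsum_eq_sum (s := s) (fun x hx => by rw [hamem x hx, hbmem x hx]; ring),
      tsum_eq_sum (s := s) (fun x hx => by rw [hamem x hx]; ring),
      tsum_eq_sum (s := s) (fun x hx => by rw [hbmem x hx]; ring)]
  let u : EuclideanSpace ℝ s := WithLp.toLp 2 (fun i => a i)
  let v : EuclideanSpace ℝ s := WithLp.toLp 2 (fun i => b i)
  have hnorm : ∀ w : EuclideanSpace ℝ s, ‖w‖ = Real.sqrt (∑ i : s, w i ^ 2) := by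
    intro w
    rw [EuclideanSpace.norm_eq]
    congr 1
    exact Finset.sum_congr rfl fun i _ => by rw [Real.norm_eq_abs, sq_abs]
  have htri := norm_add_le u v
  rw [hnorm, hnorm, hnorm] at htri
  calc Real.sqrt (∑ x ∈ s, (a x + b x) ^ 2)
      = Real.sqrt (∑ i : s, (u + v) i ^ 2) := by
        congr 1
        rw [← Finset.sum_coe_sort s (fun x => (a x + b x) ^ 2)]
        exact Finset.sum_congr rfl fun i _ => by simp [u, v, PiLp.add_apply]
    _ ≤ Real.sqrt (∑ i : s, u i ^ 2) + Real.sqrt (∑ i : s, v i ^ 2) := htri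
    _ = Real.sqrt (∑ x ∈ s, a x ^ 2) + Real.sqrt (∑ x ∈ s, b x ^ 2) := by
        rw [← Finset.sum_coe_sort s (fun x => a x ^ 2), ← Finset.sum_coe_sort s (fun x => b x ^ 2)]

lemma norm21_add_le (H : Subgroup G) (ψ₁ ψ₂ : G → ℂ)
    (h1 : (Function.support ψ₁).Finite) (h2 : (Function.support ψ₂).Finite) :
    norm21 H (fun g => ψ₁ g + ψ₂ g) ≤ norm21 H ψ₁ + norm21 H ψ₂ := by
  have hsum : (Function.support (fun g => ψ₁ g + ψ₂ g)).Finite := by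
    refine (h1.union h2).subset ?_
    intro g hg
    simp only [Function.mem_support] at hg
    by_contra hc
    simp only [Set.mem_union, Function.mem_support, not_or, not_not] at hc
    exact hg (by rw [hc.1, hc.2, add_zero])
  have hfib : ∀ x, fib H (fun g => ψ₁ g + ψ₂ g) x ≤ fib H ψ₁ x + fib H ψ₂ x := by
    intro x
    unfold fib
    rw [← Summable.tsum_add (summable_fib_inner H ψ₁ h1 x) (summable_fib_inner H ψ₂ h2 x)]
    exact Summable.tsum_le_tsum (fun g => norm_add_le _ _)
      (summable_fib_inner H _ hsum x)
      ((summable_fib_inner H ψ₁ h1 x).add (summable_fib_inner H ψ₂ h2 x))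
  have hsq : (Function.support (fun x => (fib H ψ₁ x + fib H ψ₂ x) ^ 2)).Finite := by
    refine ((fib_supp_fin H ψ₁ h1).union (fib_supp_fin H ψ₂ h2)).subset ?_
    intro x hx
    simp only [Function.mem_support] at hx
    by_contra hc
    simp only [Set.mem_union, Function.mem_support, not_or, not_not] at hc
    exact hx (by rw [hc.1, hc.2]; ring)
  have hmono : (∑' x, fib H (fun g => ψ₁ g + ψ₂ g) x ^ 2) ≤
      ∑' x, (fib H ψ₁ x + fib H ψ₂ x) ^ 2 := by
    refine Summable.tsum_le_tsum (fun x => ?_)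
      (summable_of_fin_supp _ (fib_sq_supp_fin H _ hsum))
      (summable_of_fin_supp _ hsq)
    exact pow_le_pow_left₀ (fib_nonneg H _ x) (hfib x) 2
  calc norm21 H (fun g => ψ₁ g + ψ₂ g) ≤ Real.sqrt (∑' x, (fib H ψ₁ x + fib H ψ₂ x) ^ 2) :=
        Real.sqrt_le_sqrt hmono
    _ ≤ norm21 H ψ₁ + norm21 H ψ₂ :=
        minkowski _ _ (fib_supp_fin H ψ₁ h1) (fib_supp_fin H ψ₂ h2)

lemma supp_translate_fin (Φ : G → ℂ) (hΦ : (Function.support Φ).Finite) (c : ℂ) (y : G) :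
    (Function.support (fun g => c * Φ (y⁻¹ * g))).Finite := by
  refine (hΦ.image (fun h => y * h)).subset ?_
  intro g hg
  simp only [Function.mem_support] at hg
  have hne : Φ (y⁻¹ * g) ≠ 0 := fun h => hg (by rw [h, mul_zero])
  exact ⟨y⁻¹ * g, hne, by group⟩

lemma supp_sum_fin (F Φ : G → ℂ) (hΦ : (Function.support Φ).Finite) (s : Finset G) :
    (Function.support (fun g => ∑ y ∈ s, F y * Φ (y⁻¹ * g))).Finite := by
  have hsub : (Function.support (fun g => ∑ y ∈ s, F y * Φ (y⁻¹ * g))) ⊆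
      ⋃ y ∈ (s : Set G), (fun h => y * h) '' (Function.support Φ) := by
    intro g hg
    simp only [Function.mem_support] at hg
    obtain ⟨y, hy, hne⟩ := Finset.exists_ne_zero_of_sum_ne_zero hg
    have hne' : Φ (y⁻¹ * g) ≠ 0 := fun h => hne (by rw [h, mul_zero])
    exact Set.mem_biUnion hy ⟨y⁻¹ * g, hne', by group⟩
  exact (Set.Finite.biUnion s.finite_toSet (fun y _ => hΦ.image _)).subset hsub

lemma norm21_zero (H : Subgroup G) : norm21 H (fun _ => 0) = 0 := by
  have hz : ∀ x : G ⧸ H, fib H (fun _ => (0 : ℂ)) x ^ 2 = 0 := by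
    intro x
    unfold fib
    simp
  rw [norm21_eq, tsum_congr hz, tsum_zero, Real.sqrt_zero]

lemma norm21_convsum_le (H : Subgroup G) (F Φ : G → ℂ)
    (hΦ : (Function.support Φ).Finite) (s : Finset G) :
    norm21 H (fun g => ∑ y ∈ s, F y * Φ (y⁻¹ * g)) ≤ (∑ y ∈ s, ‖F y‖) * norm21 H Φ := by
  classical
  induction s using Finset.induction with
  | empty =>
      simp only [Finset.sum_empty, zero_mul]
      exact le_of_eq (norm21_zero H)
  | @insert a s ha ih =>
      have hstep : norm21 H (fun g => ∑ y ∈ insert a s, F y * Φ (y⁻¹ * g)) ≤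
          norm21 H (fun g => F a * Φ (a⁻¹ * g)) +
            norm21 H (fun g => ∑ y ∈ s, F y * Φ (y⁻¹ * g)) := by
        have heq : (fun g => ∑ y ∈ insert a s, F y * Φ (y⁻¹ * g)) =
            (fun g => F a * Φ (a⁻¹ * g) + ∑ y ∈ s, F y * Φ (y⁻¹ * g)) := by
          funext g
          rw [Finset.sum_insert ha]
        rw [heq]
        exact norm21_add_le H _ _ (supp_translate_fin Φ hΦ (F a) a) (supp_sum_fin F Φ hΦ s)
      have hfirst : norm21 H (fun g => F a * Φ (a⁻¹ * g)) = ‖F a‖ * norm21 H Φ := by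
        rw [norm21_smul H (fun g => Φ (a⁻¹ * g)) (F a), norm21_translate H Φ a]
      rw [Finset.sum_insert ha, add_mul]
      calc norm21 H (fun g => ∑ y ∈ insert a s, F y * Φ (y⁻¹ * g)) ≤
            norm21 H (fun g => F a * Φ (a⁻¹ * g)) +
              norm21 H (fun g => ∑ y ∈ s, F y * Φ (y⁻¹ * g)) := hstep
        _ ≤ ‖F a‖ * norm21 H Φ + (∑ y ∈ s, ‖F y‖) * norm21 H Φ := by
            rw [hfirst]
            exact add_le_add le_rfl ih

lemma convC_eq_sum (F Φ : G → ℂ) (s : Finset G) (hF : ∀ g ∉ s, F g = 0) :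
    convC F Φ = fun g => ∑ y ∈ s, F y * Φ (y⁻¹ * g) := by
  funext g
  exact tsum_eq_sum (fun y hy => by rw [hF y hy, zero_mul])

lemma norm21_convC_le (H : Subgroup G) (F Φ : G → ℂ)
    (hΦ : (Function.support Φ).Finite) (s : Finset G) (hF : ∀ g ∉ s, F g = 0) :
    norm21 H (convC F Φ) ≤ (∑ y ∈ s, ‖F y‖) * norm21 H Φ := by
  rw [convC_eq_sum F Φ s hF]
  exact norm21_convsum_le H F Φ hΦ s

/-! ### Transfer between `(K, H ∩ K)` and `(G, H)` -/

def quotMap (K H : Subgroup G) : K ⧸ H.subgroupOf K → G ⧸ H :=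
  Quotient.map' Subtype.val (fun a b h => by
    rw [QuotientGroup.leftRel_apply] at h ⊢
    simpa [Subgroup.mem_subgroupOf] using h)

lemma quotMap_mk (K H : Subgroup G) (k : K) :
    quotMap K H (QuotientGroup.mk k) = QuotientGroup.mk (k : G) := rfl

lemma quotMap_injective (K H : Subgroup G) : Function.Injective (quotMap K H) := by
  intro ξ η
  refine Quotient.inductionOn₂' ξ η ?_
  intro a b h
  have h' : QuotientGroup.mk (a : G) = (QuotientGroup.mk (b : G) : G ⧸ H) := h
  rw [QuotientGroup.eq] at h'
  show (QuotientGroup.mk a : K ⧸ H.subgroupOf K) = QuotientGroup.mk b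
  rw [QuotientGroup.eq]
  simpa [Subgroup.mem_subgroupOf] using h'

lemma exists_of_fib_ne_zero (H : Subgroup G) (ψ : G → ℂ) (x : G ⧸ H) (h : fib H ψ x ≠ 0) :
    ∃ g : G, (QuotientGroup.mk g : G ⧸ H) = x ∧ ψ g ≠ 0 := by
  by_contra hc
  push_neg at hc
  apply h
  unfold fib
  have hz : ∀ g : {g : G // (QuotientGroup.mk g : G ⧸ H) = x}, ‖ψ (g : G)‖ = 0 := by
    rintro ⟨g, hg⟩
    simp [hc g hg]
  rw [tsum_congr hz, tsum_zero]

lemma fib_ext (K H : Subgroup G) (ψ : K → ℂ) (ξ : K ⧸ H.subgroupOf K) :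
    fib H (ext K ψ) (quotMap K H ξ) = fib (H.subgroupOf K) ψ ξ := by
  unfold fib
  refine tsum_eq_tsum_of_ne_zero_bij
    (fun p => ⟨((p : {k : K // (QuotientGroup.mk k : K ⧸ H.subgroupOf K) = ξ}) : K),
      (quotMap_mk K H _).symm.trans
        (congrArg (quotMap K H)
          (p : {k : K // (QuotientGroup.mk k : K ⧸ H.subgroupOf K) = ξ}).2)⟩)
    ?_ ?_ ?_
  · rintro ⟨⟨a, ha⟩, hpa⟩ ⟨⟨b, hb⟩, hpb⟩ h
    simp only [Subtype.mk.injEq] at h ⊢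
    exact Subtype.ext h
  · rintro ⟨g, hg⟩ hsupp
    simp only [Function.mem_support] at hsupp
    have hne : ext K ψ g ≠ 0 := by
      intro h0; exact hsupp (by simp [h0])
    have hk : g ∈ K := mem_of_ext_ne_zero K hne
    have hkξ : (QuotientGroup.mk (⟨g, hk⟩ : K) : K ⧸ H.subgroupOf K) = ξ := by
      apply quotMap_injective
      rw [quotMap_mk]
      exact hg
    have hψ : ψ ⟨g, hk⟩ ≠ 0 := by
      rw [← ext_coe K ψ ⟨g, hk⟩]; exact hne
    refine ⟨⟨⟨⟨g, hk⟩, hkξ⟩, by simpa [Function.mem_support] using hψ⟩, ?_⟩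
    apply Subtype.ext
    rfl
  · intro p
    simp [ext_coe]

lemma norm21_ext (K H : Subgroup G) (ψ : K → ℂ) :
    norm21 H (ext K ψ) = norm21 (H.subgroupOf K) ψ := by
  rw [norm21_eq, norm21_eq]
  congr 1
  refine tsum_eq_tsum_of_ne_zero_bij (fun p => quotMap K H ↑p) ?_ ?_ ?_
  · intro p q h
    exact Subtype.ext (quotMap_injective K H h)
  · intro x hx
    simp only [Function.mem_support] at hx
    have hfib : fib H (ext K ψ) x ≠ 0 := fun h0 => hx (by simp [h0])
    obtain ⟨g, hg, hne⟩ := exists_of_fib_ne_zero H _ x hfib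
    have hk : g ∈ K := mem_of_ext_ne_zero K hne
    have hxeq : quotMap K H (QuotientGroup.mk (⟨g, hk⟩ : K)) = x := by
      rw [quotMap_mk]; exact hg
    refine ⟨⟨QuotientGroup.mk (⟨g, hk⟩ : K), ?_⟩, hxeq⟩
    simp only [Function.mem_support]
    rw [← fib_ext K H ψ, hxeq]
    exact hx
  · intro p
    rw [fib_ext]

lemma convC_ext (K : Subgroup G) (f φ : K → ℂ) :
    convC (ext K f) (ext K φ) = ext K (convC f φ) := by
  funext g
  by_cases hg : g ∈ K
  · have hg' : g = ((⟨g, hg⟩ : K) : G) := rfl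
    rw [hg', ext_coe]
    unfold convC
    refine tsum_eq_tsum_of_ne_zero_bij (fun p => ((p : K) : G)) ?_ ?_ ?_
    · intro p q h
      apply Subtype.ext
      exact Subtype.ext h
    · intro y hy
      simp only [Function.mem_support] at hy
      have hf : ext K f y ≠ 0 := fun h0 => hy (by simp [h0])
      have hyK : y ∈ K := mem_of_ext_ne_zero K hf
      refine ⟨⟨⟨y, hyK⟩, ?_⟩, rfl⟩
      simp only [Function.mem_support]
      have hcoe : (((⟨y, hyK⟩ : K)⁻¹ * ⟨g, hg⟩ : K) : G) = y⁻¹ * ((⟨g, hg⟩ : K) : G) := rfl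
      rw [← ext_coe K f ⟨y, hyK⟩, ← ext_coe K φ ((⟨y, hyK⟩ : K)⁻¹ * ⟨g, hg⟩), hcoe]
      exact hy
    · intro p
      have hcoe : ((((p : K) : K)⁻¹ * ⟨g, hg⟩ : K) : G) =
          ((p : K) : G)⁻¹ * ((⟨g, hg⟩ : K) : G) := rfl
      rw [← ext_coe K f (p : K), ← ext_coe K φ _, hcoe]
  · rw [ext_of_not_mem K _ hg]
    unfold convC
    have hz : ∀ y : G, ext K f y * ext K φ (y⁻¹ * g) = 0 := by
      intro y
      by_cases hy : y ∈ K
      · have hnot : y⁻¹ * g ∉ K := by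
          intro hmem
          exact hg (by simpa using K.mul_mem hy hmem)
        rw [ext_of_not_mem K _ hnot, mul_zero]
      · rw [ext_of_not_mem K _ hy, zero_mul]
    rw [tsum_congr hz, tsum_zero]

lemma ext_ofReal (K : Subgroup G) (φ : K → ℝ) :
    ext K (fun k => ((φ k : ℝ) : ℂ)) = fun g => ((ext K φ g : ℝ) : ℂ) := by
  funext g
  by_cases hg : g ∈ K <;> simp [ext, hg]

/-! ### Word lengths -/

lemma exists_word (S : Set G) (hsym : ∀ s ∈ S, s⁻¹ ∈ S)
    (htop : Subgroup.closure S = ⊤) (g : G) :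
    ∃ l : List G, (∀ s ∈ l, s ∈ S) ∧ l.prod = g := by
  have hg : g ∈ Subgroup.closure S := htop ▸ Subgroup.mem_top g
  have hg' : g ∈ Submonoid.closure (S ∪ S⁻¹) := by
    rw [← Subgroup.closure_toSubmonoid]
    exact hg
  obtain ⟨l, hl, hprod⟩ := Submonoid.exists_list_of_mem_closure hg'
  refine ⟨l, ?_, hprod⟩
  intro s hs
  rcases hl s hs with h | h
  · exact h
  · simpa using hsym _ h

lemma wordSet_nonempty (S : Set G) (hsym : ∀ s ∈ S, s⁻¹ ∈ S)
    (htop : Subgroup.closure S = ⊤) (g : G) :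
    {n : ℕ | ∃ l : List G, (∀ s ∈ l, s ∈ S) ∧ l.length = n ∧ l.prod = g}.Nonempty := by
  obtain ⟨l, hl, hprod⟩ := exists_word S hsym htop g
  exact ⟨l.length, l, hl, rfl, hprod⟩

lemma exists_min_word (S : Set G) (hsym : ∀ s ∈ S, s⁻¹ ∈ S)
    (htop : Subgroup.closure S = ⊤) (g : G) :
    ∃ l : List G, (∀ s ∈ l, s ∈ S) ∧ l.length = wordLength S g ∧ l.prod = g :=
  Nat.sInf_mem (wordSet_nonempty S hsym htop g)

lemma wordLength_le (S : Set G) {g : G} {l : List G} (hl : ∀ s ∈ l, s ∈ S)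
    (hprod : l.prod = g) : wordLength S g ≤ l.length :=
  Nat.sInf_le ⟨l, hl, rfl, hprod⟩

lemma wordLength_one (S : Set G) : wordLength S (1 : G) = 0 :=
  Nat.le_zero.mp (wordLength_le S (l := []) (by simp) (by simp))

lemma wordLength_mul_le (S : Set G) (hsym : ∀ s ∈ S, s⁻¹ ∈ S)
    (htop : Subgroup.closure S = ⊤) (a b : G) :
    wordLength S (a * b) ≤ wordLength S a + wordLength S b := by
  obtain ⟨la, hla, hlena, hproda⟩ := exists_min_word S hsym htop a
  obtain ⟨lb, hlb, hlenb, hprodb⟩ := exists_min_word S hsym htop b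
  have hle := wordLength_le S (g := a * b) (l := la ++ lb)
    (by intro s hs; rcases List.mem_append.mp hs with h | h
        exacts [hla s h, hlb s h])
    (by rw [List.prod_append, hproda, hprodb])
  simpa [hlena, hlenb] using hle

lemma wordLength_list_prod_le (S : Set G) (hsym : ∀ s ∈ S, s⁻¹ ∈ S)
    (htop : Subgroup.closure S = ⊤) (M : ℕ) :
    ∀ l : List G, (∀ x ∈ l, wordLength S x ≤ M) →
      wordLength S l.prod ≤ M * l.length := by
  intro l
  induction l with
  | nil => intro _; simp [wordLength_one]
  | cons x t ih =>
      intro hx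
      have h1 : wordLength S (x * t.prod) ≤ wordLength S x + wordLength S t.prod :=
        wordLength_mul_le S hsym htop x t.prod
      have h2 : wordLength S t.prod ≤ M * t.length := ih (fun y hy => hx y (by simp [hy]))
      have h3 : wordLength S x ≤ M := hx x (by simp)
      calc wordLength S (x :: t).prod = wordLength S (x * t.prod) := by rw [List.prod_cons]
        _ ≤ M + M * t.length := le_trans h1 (add_le_add h3 h2)
        _ = M * (t.length + 1) := by ring
        _ = M * (x :: t).length := by simp

lemma ball_finite (S : Finset G) (hsym : ∀ s ∈ S, s⁻¹ ∈ S)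
    (htop : Subgroup.closure (S : Set G) = ⊤) (n : ℕ) :
    {g : G | wordLength (S : Set G) g ≤ n}.Finite := by
  induction n with
  | zero =>
      refine (Set.finite_singleton (1 : G)).subset ?_
      intro g hg
      simp only [Set.mem_setOf_eq, Nat.le_zero] at hg
      obtain ⟨l, hl, hlen, hprod⟩ := exists_min_word (S : Set G) hsym htop g
      rw [hg] at hlen
      rw [List.length_eq_zero_iff] at hlen
      rw [hlen] at hprod
      simp only [List.prod_nil] at hprod
      simp [← hprod]
  | succ n ih =>
      have hsub : {g : G | wordLength (S : Set G) g ≤ n + 1} ⊆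
          {g : G | wordLength (S : Set G) g ≤ n} ∪
            ⋃ s ∈ (S : Set G), (fun h => s * h) '' {g : G | wordLength (S : Set G) g ≤ n} := by
        intro g hg
        simp only [Set.mem_setOf_eq] at hg
        obtain ⟨l, hl, hlen, hprod⟩ := exists_min_word (S : Set G) hsym htop g
        match l, hl, hlen, hprod with
        | [], hl, hlen, hprod =>
            left
            simp only [Set.mem_setOf_eq]
            have h0 : wordLength (S : Set G) g = 0 := by
              rw [← hlen]; rfl
            omega
        | x :: t, hl, hlen, hprod =>
            right
            have hx : x ∈ (S : Set G) := hl x (by simp)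
            have ht : wordLength (S : Set G) t.prod ≤ n := by
              have hle := wordLength_le (S : Set G) (g := t.prod) (l := t)
                (fun s hs => hl s (by simp [hs])) rfl
              have hlen' : (x :: t).length = wordLength (S : Set G) g := hlen
              simp only [List.length_cons] at hlen'
              omega
            refine Set.mem_biUnion hx ⟨t.prod, ht, ?_⟩
            rw [← hprod, List.prod_cons]
      exact (ih.union (Set.Finite.biUnion S.finite_toSet (fun s _ => ih.image _))).subset hsub

end Statement14Aux

/-- If the pair `(G,H)` satisfies `‖f‖_h ≤ C_h ‖f·w‖_{(2,1)}` for a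
weight `w : G → [1,∞)`, `K ≤ G` is a subgroup and `L = K ∩ H`, then the same
convolution estimate holds on the pair `(K,L)` with the restricted weight; moreover,
if `G` carries a word length with subexponential radial majorant of `w` and `K` is
generated by a finite symmetric set with word length `ℓ_K`, then
`(K,L) ∈ SLC_subexp` with respect to `ℓ_K`. -/


theorem statement14 {G : Type*} [Group G] [Countable G] (H : Subgroup G)
    (C : ℝ) (hC : 0 < C) (w : G → ℝ) (hw : ∀ g, 1 ≤ w g)
    (hineq : ∀ f : G → ℂ, (Function.support f).Finite →
      PaperRD.hNorm H f ≤ C * PaperRD.norm21 H (fun g => f g * (w g : ℂ)))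
    (K : Subgroup G) :
    (∀ f : K → ℂ, (Function.support f).Finite →
      PaperRD.hNorm (H.subgroupOf K) f ≤
        C * PaperRD.norm21 (H.subgroupOf K) (fun k => f k * (w (k : G) : ℂ))) ∧
    (∀ (S : Finset G), (∀ s ∈ S, s⁻¹ ∈ S) → Subgroup.closure (S : Set G) = ⊤ →
      Filter.Tendsto
        (fun t : ℕ =>
          Real.log (PaperRD.radialMaj (PaperRD.wordLength (S : Set G)) w t) / (t : ℝ))
        Filter.atTop (𝓝 0) →
      ∀ (SK : Finset K), (∀ s ∈ SK, s⁻¹ ∈ SK) →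
        Subgroup.closure (SK : Set K) = ⊤ →
        PaperRD.SLCsubexp (H.subgroupOf K) (PaperRD.wordLength (SK : Set K))) := by
  classical
  open Statement14Aux in
  have part1 : ∀ f : K → ℂ, (Function.support f).Finite →
      PaperRD.hNorm (H.subgroupOf K) f ≤
        C * PaperRD.norm21 (H.subgroupOf K) (fun k => f k * (w (k : G) : ℂ)) := by
    intro f hf
    have hF : (Function.support (Statement14Aux.ext K f)).Finite := ext_supp_fin K hf
    have hRHS : 0 ≤ C * PaperRD.norm21 (H.subgroupOf K) (fun k => f k * (w (k : G) : ℂ)) :=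
      mul_nonneg hC.le (norm21_nonneg _ _)
    refine Real.sSup_le ?_ hRHS
    rintro r ⟨φ, hφfin, hφpos, hφnorm, rfl⟩
    have hΦfin : (Function.support (Statement14Aux.ext K φ)).Finite := ext_supp_fin K hφfin
    have hΦpos : ∀ y, 0 ≤ Statement14Aux.ext K φ y := by
      intro y
      by_cases hy : y ∈ K
      · rw [show y = ((⟨y, hy⟩ : K) : G) from rfl, ext_coe]; exact hφpos _
      · rw [ext_of_not_mem K _ hy]
    have hΦc : (fun g => ((Statement14Aux.ext K φ g : ℝ) : ℂ)) =
        Statement14Aux.ext K (fun k => ((φ k : ℝ) : ℂ)) := (ext_ofReal K φ).symm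
    have hΦnorm : PaperRD.norm21 H (fun g => ((Statement14Aux.ext K φ g : ℝ) : ℂ)) =
        PaperRD.norm21 (H.subgroupOf K) (fun k => ((φ k : ℝ) : ℂ)) := by
      rw [hΦc, norm21_ext]
    have hval : PaperRD.norm21 H
          (PaperRD.convC (Statement14Aux.ext K f) (fun g => ((Statement14Aux.ext K φ g : ℝ) : ℂ))) =
        PaperRD.norm21 (H.subgroupOf K) (PaperRD.convC f (fun k => ((φ k : ℝ) : ℂ))) := by
      rw [hΦc, convC_ext, norm21_ext]
    -- the admissible set for the pair (G, H) and the function ext K f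
    set SG : Set ℝ := {r : ℝ | ∃ φ' : G → ℝ, (Function.support φ').Finite ∧ (∀ y, 0 ≤ φ' y) ∧
      PaperRD.norm21 H (fun g => ((φ' g : ℝ) : ℂ)) ≤ 1 ∧
      r = PaperRD.norm21 H
        (PaperRD.convC (Statement14Aux.ext K f) (fun g => ((φ' g : ℝ) : ℂ)))} with hSG
    have hmem : PaperRD.norm21 H
        (PaperRD.convC (Statement14Aux.ext K f)
          (fun g => ((Statement14Aux.ext K φ g : ℝ) : ℂ))) ∈ SG :=
      ⟨Statement14Aux.ext K φ, hΦfin, hΦpos, by rw [hΦnorm]; exact hφnorm, rfl⟩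
    have hbdd : BddAbove SG := by
      refine ⟨∑ y ∈ hF.toFinset, ‖Statement14Aux.ext K f y‖, ?_⟩
      rintro r ⟨φ', h1, h2, h3, rfl⟩
      have hφ'fin : (Function.support (fun g => ((φ' g : ℝ) : ℂ))).Finite := by
        refine h1.subset ?_
        intro g hg
        simp only [Function.mem_support] at hg ⊢
        exact fun h => hg (by rw [h, Complex.ofReal_zero])
      have hFz : ∀ g ∉ hF.toFinset, Statement14Aux.ext K f g = 0 := by
        intro g hg
        by_contra h
        exact hg (hF.mem_toFinset.mpr h)
      have hle := norm21_convC_le H (Statement14Aux.ext K f) (fun g => ((φ' g : ℝ) : ℂ))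
        hφ'fin hF.toFinset hFz
      calc PaperRD.norm21 H (PaperRD.convC (Statement14Aux.ext K f)
              (fun g => ((φ' g : ℝ) : ℂ)))
          ≤ (∑ y ∈ hF.toFinset, ‖Statement14Aux.ext K f y‖) *
              PaperRD.norm21 H (fun g => ((φ' g : ℝ) : ℂ)) := hle
        _ ≤ (∑ y ∈ hF.toFinset, ‖Statement14Aux.ext K f y‖) * 1 := by
            refine mul_le_mul_of_nonneg_left h3 ?_
            exact Finset.sum_nonneg fun y _ => norm_nonneg _
        _ = ∑ y ∈ hF.toFinset, ‖Statement14Aux.ext K f y‖ := mul_one _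
    have hsup : PaperRD.norm21 H
        (PaperRD.convC (Statement14Aux.ext K f)
          (fun g => ((Statement14Aux.ext K φ g : ℝ) : ℂ))) ≤
        PaperRD.hNorm H (Statement14Aux.ext K f) :=
      le_csSup hbdd hmem
    have hwt : PaperRD.norm21 H (fun g => Statement14Aux.ext K f g * (w g : ℂ)) =
        PaperRD.norm21 (H.subgroupOf K) (fun k => f k * (w (k : G) : ℂ)) := by
      have heq : (fun g => Statement14Aux.ext K f g * (w g : ℂ)) =
          Statement14Aux.ext K (fun k => f k * (w (k : G) : ℂ)) := by
        funext g
        by_cases hg : g ∈ K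
        · rw [show g = ((⟨g, hg⟩ : K) : G) from rfl, ext_coe, ext_coe]
        · rw [ext_of_not_mem K _ hg, ext_of_not_mem K _ hg, zero_mul]
      rw [heq, norm21_ext]
    calc PaperRD.norm21 (H.subgroupOf K) (PaperRD.convC f (fun k => ((φ k : ℝ) : ℂ)))
        = PaperRD.norm21 H (PaperRD.convC (Statement14Aux.ext K f)
            (fun g => ((Statement14Aux.ext K φ g : ℝ) : ℂ))) := hval.symm
      _ ≤ PaperRD.hNorm H (Statement14Aux.ext K f) := hsup
      _ ≤ C * PaperRD.norm21 H (fun g => Statement14Aux.ext K f g * (w g : ℂ)) :=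
          hineq (Statement14Aux.ext K f) hF
      _ = C * PaperRD.norm21 (H.subgroupOf K) (fun k => f k * (w (k : G) : ℂ)) := by rw [hwt]
  refine ⟨part1, ?_⟩
  intro S hSsym hStop hWsub SK hSKsym hSKtop
  refine ⟨C, hC, fun k => w (k : G), fun k => hw _, part1, ?_⟩
  -- the comparison constant
  set M : ℕ := SK.sup (fun s => PaperRD.wordLength (S : Set G) ((s : K) : G)) + 1 with hM
  have hMpos : 0 < M := Nat.succ_pos _
  -- length comparison
  have hlen : ∀ k : K, PaperRD.wordLength (S : Set G) (k : G) ≤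
      M * PaperRD.wordLength (SK : Set K) k := by
    intro k
    obtain ⟨l, hl, hlenl, hprod⟩ := exists_min_word (SK : Set K) hSKsym hSKtop k
    have hcoe : (k : G) = (l.map (⇑K.subtype)).prod := by
      rw [← hprod, ← MonoidHom.map_list_prod]
      rfl
    have hbound : ∀ x ∈ l.map (⇑K.subtype), PaperRD.wordLength (S : Set G) x ≤ M := by
      intro x hx
      obtain ⟨y, hy, rfl⟩ := List.mem_map.mp hx
      have hymem : y ∈ SK := hl y hy
      calc PaperRD.wordLength (S : Set G) (K.subtype y)
          ≤ SK.sup (fun s => PaperRD.wordLength (S : Set G) ((s : K) : G)) := by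
            rw [Subgroup.coe_subtype]
            exact Finset.le_sup (f := fun s : K => PaperRD.wordLength (S : Set G) ((s : K) : G)) hymem
        _ ≤ M := Nat.le_succ _
    calc PaperRD.wordLength (S : Set G) (k : G)
        = PaperRD.wordLength (S : Set G) (l.map (⇑K.subtype)).prod := by rw [← hcoe]
      _ ≤ M * (l.map (⇑K.subtype)).length :=
          wordLength_list_prod_le (S : Set G) hSsym hStop M _ hbound
      _ = M * PaperRD.wordLength (SK : Set K) k := by rw [List.length_map, hlenl]
  -- balls in G are finite
  have hballG : ∀ n : ℕ, {g : G | PaperRD.wordLength (S : Set G) g ≤ n}.Finite :=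
    ball_finite S hSsym hStop
  have hWbdd : ∀ n : ℕ, BddAbove (w '' {g : G | PaperRD.wordLength (S : Set G) g ≤ n}) :=
    fun n => ((hballG n).image w).bddAbove
  have h1G : ∀ n : ℕ, (1 : G) ∈ {g : G | PaperRD.wordLength (S : Set G) g ≤ n} := by
    intro n
    simp [Set.mem_setOf_eq, wordLength_one]
  have hW1 : ∀ n : ℕ, 1 ≤ PaperRD.radialMaj (PaperRD.wordLength (S : Set G)) w n :=
    fun n => le_trans (hw 1) (le_csSup (hWbdd n) ⟨1, h1G n, rfl⟩)
  -- comparison of radial majorants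
  have hRle : ∀ t : ℕ, ∀ r ∈ ((fun k : K => w (k : G)) ''
      {k : K | PaperRD.wordLength (SK : Set K) k ≤ t}),
      r ≤ PaperRD.radialMaj (PaperRD.wordLength (S : Set G)) w (M * t) := by
    rintro t r ⟨k, hk, rfl⟩
    refine le_csSup (hWbdd (M * t)) ⟨(k : G), ?_, rfl⟩
    simp only [Set.mem_setOf_eq] at hk ⊢
    calc PaperRD.wordLength (S : Set G) (k : G) ≤ M * PaperRD.wordLength (SK : Set K) k :=
          hlen k
      _ ≤ M * t := Nat.mul_le_mul_left M hk
  have hRK_le : ∀ t : ℕ,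
      PaperRD.radialMaj (PaperRD.wordLength (SK : Set K)) (fun k : K => w (k : G)) t ≤
        PaperRD.radialMaj (PaperRD.wordLength (S : Set G)) w (M * t) :=
    fun t => Real.sSup_le (hRle t) (le_trans zero_le_one (hW1 _))
  have hRKbdd : ∀ t : ℕ, BddAbove ((fun k : K => w (k : G)) ''
      {k : K | PaperRD.wordLength (SK : Set K) k ≤ t}) :=
    fun t => ⟨PaperRD.radialMaj (PaperRD.wordLength (S : Set G)) w (M * t), hRle t⟩
  have hRK1 : ∀ t : ℕ,
      1 ≤ PaperRD.radialMaj (PaperRD.wordLength (SK : Set K)) (fun k : K => w (k : G)) t := by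
    intro t
    refine le_trans (hw ((1 : K) : G)) (le_csSup (hRKbdd t) ⟨1, ?_, rfl⟩)
    simp [Set.mem_setOf_eq, wordLength_one]
  -- the dominating sequence
  have hcomp : Tendsto (fun t : ℕ => M * t) atTop atTop :=
    Filter.tendsto_atTop_mono (fun t => Nat.le_mul_of_pos_left t hMpos) tendsto_id
  have hv0 : Tendsto (fun t : ℕ => (M : ℝ) *
      (Real.log (PaperRD.radialMaj (PaperRD.wordLength (S : Set G)) w (M * t)) /
        ((M * t : ℕ) : ℝ))) atTop (𝓝 0) := by
    have hcomp2 := hWsub.comp hcomp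
    have := hcomp2.const_mul (M : ℝ)
    simpa using this
  refine tendsto_of_tendsto_of_tendsto_of_le_of_le tendsto_const_nhds hv0 ?_ ?_
  · intro t
    exact div_nonneg (Real.log_nonneg (hRK1 t)) (Nat.cast_nonneg t)
  · intro t
    rcases Nat.eq_zero_or_pos t with rfl | ht
    · simp
    · have htR : (0 : ℝ) < (t : ℝ) := by exact_mod_cast ht
      have hlog : Real.log
            (PaperRD.radialMaj (PaperRD.wordLength (SK : Set K)) (fun k : K => w (k : G)) t) ≤
          Real.log (PaperRD.radialMaj (PaperRD.wordLength (S : Set G)) w (M * t)) :=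
        Real.log_le_log (lt_of_lt_of_le zero_lt_one (hRK1 t)) (hRK_le t)
      have hcast : ((M * t : ℕ) : ℝ) = (M : ℝ) * (t : ℝ) := by push_cast; ring
      have hM0 : (M : ℝ) ≠ 0 := by positivity
      calc Real.log
            (PaperRD.radialMaj (PaperRD.wordLength (SK : Set K)) (fun k : K => w (k : G)) t) /
              (t : ℝ)
          ≤ Real.log (PaperRD.radialMaj (PaperRD.wordLength (S : Set G)) w (M * t)) / (t : ℝ) :=
            (div_le_div_iff_of_pos_right htR).mpr hlog
        _ = (M : ℝ) * (Real.log (PaperRD.radialMaj (PaperRD.wordLength (S : Set G)) w (M * t)) /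
              ((M * t : ℕ) : ℝ)) := by
            rw [hcast]
            field_simp
end
end

section
/- Let G be a group generated by a finite symmetric set S with word length ℓ_G, let π : G → Q be a surjective group homomorphism, and equip Q with the generating set π(S) and its word length ℓ_Q (so that ℓ_Q(π(g)) ≤ ℓ_G(g) for all g ∈ G). Let L ≤ Q and set H = π⁻¹(L). If the pair (Q,L) has pair rapid decay, then the pair (G,H) has pair rapid decay; and if (Q,L) ∈ SLC_subexp, then (G,H) ∈ SLC_subexp. -/
open scoped ENNReal
open Filter Topology

noncomputable section

section Aux15
set_option maxHeartbeats 1000000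
set_option linter.unusedSectionVars false
open PaperRD Function
open scoped Pointwise
open scoped Classical

open scoped Classical

variable {X E : Type*} [AddCommMonoid E] [TopologicalSpace E]

lemma fin_summable {f : X → E} (hf : (Function.support f).Finite) : Summable f :=
  summable_of_ne_finset_zero (s := hf.toFinset) fun b hb => by
    by_contra h; exact hb (hf.mem_toFinset.mpr h)

lemma fin_support_comp_val {E : Type*} [Zero E] {f : X → E} (hf : (Function.support f).Finite)
    (P : X → Prop) : (Function.support fun g : {x // P x} => f g.1).Finite := by
  have : (Function.support fun g : {x // P x} => f g.1) = Subtype.val ⁻¹' Function.support f := rfl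
  rw [this]
  exact Set.Finite.preimage (Set.injOn_of_injective Subtype.val_injective) hf

lemma tsum_fiber_eq [T2Space E] (P : X → Prop) (f : X → E) :
    ∑' x : {a // P a}, f x.1 = ∑' a, if P a then f a else 0 := by
  have : ∑' x : {a | P a}, f x.1 = ∑' a, if P a then f a else 0 := by
    rw [tsum_subtype {a | P a} f]
    exact tsum_congr fun a => by by_cases h : P a <;> simp [Set.indicator, h]
  exact this

lemma fin_summable₂ {Y : Type*} {f : X × Y → E} {s : Set X} {t : Set Y}
    (hsub : Function.support f ⊆ s ×ˢ t) (hs : s.Finite) (ht : t.Finite) : Summable f :=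
  fin_summable ((hs.prod ht).subset hsub)


variable {K : Type*} [Group K]

/-- Push-forward of a real function along a homomorphism. -/
def push {G Q : Type*} [Group G] [Group Q] (π : G →* Q) (f : G → ℝ) (q : Q) : ℝ :=
  ∑' g : {g : G // π g = q}, f g.1

lemma push_apply' {G Q : Type*} [Group G] [Group Q] (π : G →* Q) (f : G → ℝ) (q : Q) :
    push π f q = ∑' g : G, if π g = q then f g else 0 :=
  (tsum_fiber_eq _ _).trans (tsum_congr fun g => by by_cases h : π g = q <;> simp [h])

lemma push_nonneg {G Q : Type*} [Group G] [Group Q] (π : G →* Q) {f : G → ℝ}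
    (hf : ∀ g, 0 ≤ f g) (q : Q) : 0 ≤ push π f q := tsum_nonneg fun _ => hf _

lemma push_support {G Q : Type*} [Group G] [Group Q] (π : G →* Q) (f : G → ℝ) :
    Function.support (push π f) ⊆ π '' Function.support f := by
  intro q hq
  by_contra h
  apply hq
  have hz : ∀ g : {g : G // π g = q}, f g.1 = 0 := by
    rintro ⟨g, hg⟩
    by_contra hgne
    exact h ⟨g, hgne, hg⟩
  calc push π f q = ∑' g : {g : G // π g = q}, (0 : ℝ) := tsum_congr hz
  _ = 0 := tsum_zero

lemma fiberSum_apply' (N : Subgroup K) (f : K → ℝ) (x : K ⧸ N) :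
    fiberSum N f x = ∑' g : K, if (QuotientGroup.mk g : K ⧸ N) = x then f g else 0 :=
  (tsum_fiber_eq _ _).trans
    (tsum_congr fun g => by by_cases h : (QuotientGroup.mk g : K ⧸ N) = x <;> simp [h])

lemma fiberSum_nonneg (N : Subgroup K) {f : K → ℝ} (hf : ∀ g, 0 ≤ f g) (x : K ⧸ N) :
    0 ≤ fiberSum N f x := tsum_nonneg fun _ => hf _

lemma fiberSum_support (N : Subgroup K) (f : K → ℝ) :
    Function.support (fiberSum N f) ⊆ QuotientGroup.mk '' Function.support f := by
  intro x hx
  by_contra h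
  apply hx
  have hz : ∀ g : {g : K // (QuotientGroup.mk g : K ⧸ N) = x}, f g.1 = 0 := by
    rintro ⟨g, hg⟩
    by_contra hgne
    exact h ⟨g, hgne, hg⟩
  calc fiberSum N f x = ∑' g : {g : K // (QuotientGroup.mk g : K ⧸ N) = x}, (0 : ℝ) :=
        tsum_congr hz
  _ = 0 := tsum_zero

lemma abs_support (f : K → ℂ) : Function.support (fun g => ‖f g‖) = Function.support f := by
  ext g; simp [Function.support]

lemma norm21_def (N : Subgroup K) (f : K → ℂ) :
    norm21 N f = Real.sqrt (∑' x : K ⧸ N, (fiberSum N (fun g => ‖f g‖) x) ^ 2) := rfl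

lemma norm21_congr (N : Subgroup K) {f₁ f₂ : K → ℂ} (h : ∀ g, ‖f₁ g‖ = ‖f₂ g‖) :
    norm21 N f₁ = norm21 N f₂ := by
  rw [norm21_def, norm21_def]
  congr 1
  exact tsum_congr fun x => by
    rw [show fiberSum N (fun g => ‖f₁ g‖) x = fiberSum N (fun g => ‖f₂ g‖) x from
      tsum_congr fun g => h g.1]

lemma norm21_nonneg (N : Subgroup K) (f : K → ℂ) : 0 ≤ norm21 N f := Real.sqrt_nonneg _

lemma fiberSum_sq_summable (N : Subgroup K) {h : K → ℝ} (hfin : (Function.support h).Finite) :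
    Summable fun x : K ⧸ N => (fiberSum N h x) ^ 2 := by
  apply fin_summable
  apply Set.Finite.subset ((hfin.image QuotientGroup.mk))
  intro x hx
  have : fiberSum N h x ≠ 0 := by
    intro h0; apply hx; simp [h0]
  exact fiberSum_support N h this

lemma norm21_mono (N : Subgroup K) {f₁ f₂ : K → ℂ} (h : ∀ g, ‖f₁ g‖ ≤ ‖f₂ g‖)
    (h2 : (Function.support f₂).Finite) : norm21 N f₁ ≤ norm21 N f₂ := by
  have hs1 : Function.support f₁ ⊆ Function.support f₂ := by
    intro g hg h0
    apply hg
    have h' := h g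
    rw [h0, norm_zero] at h'
    exact norm_le_zero_iff.mp h'
  have h1 : (Function.support f₁).Finite := h2.subset hs1
  have h1' : (Function.support fun g => ‖f₁ g‖).Finite := by rw [abs_support]; exact h1
  have h2' : (Function.support fun g => ‖f₂ g‖).Finite := by rw [abs_support]; exact h2
  have houter : ∑' x : K ⧸ N, (fiberSum N (fun g => ‖f₁ g‖) x) ^ 2
      ≤ ∑' x : K ⧸ N, (fiberSum N (fun g => ‖f₂ g‖) x) ^ 2 := by
    refine Summable.tsum_le_tsum (fun x => ?_) (fiberSum_sq_summable N h1') (fiberSum_sq_summable N h2')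
    have hinner : fiberSum N (fun g => ‖f₁ g‖) x ≤ fiberSum N (fun g => ‖f₂ g‖) x := by
      refine Summable.tsum_le_tsum (fun g => h g.1) ?_ ?_
      · exact fin_summable (fin_support_comp_val h1' _)
      · exact fin_summable (fin_support_comp_val h2' _)
    exact pow_le_pow_left₀ (fiberSum_nonneg N (fun g => norm_nonneg _) x) hinner 2
  rw [norm21_def, norm21_def]
  exact Real.sqrt_le_sqrt houter

section Transfer

variable {G Q : Type*} [Group G] [Group Q] (π : G →* Q) (L : Subgroup Q)

/-- Induced map on coset spaces. -/
def qmap : G ⧸ L.comap π → Q ⧸ L :=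
  Quotient.map' π fun a b hab => QuotientGroup.leftRel_apply.mpr <| by
    have h1 := QuotientGroup.leftRel_apply.mp hab
    have h2 : π (a⁻¹ * b) ∈ L := h1
    simpa [map_mul, map_inv] using h2

lemma qmap_mk (g : G) : qmap π L (QuotientGroup.mk g) = QuotientGroup.mk (π g) := rfl

lemma qmap_bijective (hπ : Function.Surjective π) : Function.Bijective (qmap π L) := by
  constructor
  · intro x y
    refine Quotient.inductionOn₂' x y fun a b hab => ?_
    have hab' : (QuotientGroup.mk (π a) : Q ⧸ L) = QuotientGroup.mk (π b) := hab
    have h1 : (π a)⁻¹ * π b ∈ L := QuotientGroup.eq.mp hab'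
    have h2 : a⁻¹ * b ∈ L.comap π := by
      simp only [Subgroup.mem_comap, map_mul, map_inv]
      exact h1
    exact QuotientGroup.eq.mpr h2
  · intro y
    refine Quotient.inductionOn' y fun q => ?_
    obtain ⟨g, hg⟩ := hπ q
    exact ⟨QuotientGroup.mk g, by rw [qmap_mk, hg]⟩

/-- The induced equivalence of coset spaces. -/
def qe (hπ : Function.Surjective π) : (G ⧸ L.comap π) ≃ (Q ⧸ L) :=
  Equiv.ofBijective (qmap π L) (qmap_bijective π L hπ)

lemma qe_mk (hπ : Function.Surjective π) (g : G) :
    qe π L hπ (QuotientGroup.mk g) = QuotientGroup.mk (π g) := rfl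

lemma mk_pi_eq_iff (hπ : Function.Surjective π) (g : G) (x : G ⧸ L.comap π) :
    ((QuotientGroup.mk (π g) : Q ⧸ L) = qe π L hπ x) ↔ (QuotientGroup.mk g : G ⧸ L.comap π) = x := by
  rw [← qe_mk π L hπ g]
  exact (qe π L hπ).apply_eq_iff_eq

/-- Fiber decomposition of coset sums. -/
lemma fiberSum_push (hπ : Function.Surjective π) (f : G → ℝ)
    (hf : (Function.support f).Finite) (x : G ⧸ L.comap π) :
    fiberSum (L.comap π) f x = fiberSum L (push π f) (qe π L hπ x) := by
  rw [fiberSum_apply', fiberSum_apply']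
  have step1 : ∀ q : Q, (if (QuotientGroup.mk q : Q ⧸ L) = qe π L hπ x then push π f q else 0)
      = ∑' g : G, (if (QuotientGroup.mk q : Q ⧸ L) = qe π L hπ x then
          (if π g = q then f g else 0) else 0) := by
    intro q
    by_cases h : (QuotientGroup.mk q : Q ⧸ L) = qe π L hπ x
    · simp only [h, if_true]; rw [push_apply']
    · simp [h]
  rw [tsum_congr step1]
  have hsum : Summable (Function.uncurry fun (g : G) (q : Q) =>
      (if (QuotientGroup.mk q : Q ⧸ L) = qe π L hπ x then (if π g = q then f g else 0) else 0)) := by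
    apply fin_summable₂ (s := Function.support f) (t := π '' Function.support f) _ hf
      (hf.image π)
    rintro ⟨g, q⟩ hgq
    rw [Function.mem_support, Function.uncurry_apply_pair] at hgq
    by_cases h1 : (QuotientGroup.mk q : Q ⧸ L) = qe π L hπ x
    · by_cases h2 : π g = q
      · have hfg : f g ≠ 0 := by simpa [h1, h2] using hgq
        exact ⟨hfg, ⟨g, hfg, h2⟩⟩
      · simp [h1, h2] at hgq
    · simp [h1] at hgq
  rw [Summable.tsum_comm hsum]
  refine tsum_congr fun g => ?_
  rw [tsum_eq_single (π g) (fun q hq => by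
    have : ¬ (π g = q) := fun h => hq h.symm
    by_cases h1 : (QuotientGroup.mk q : Q ⧸ L) = qe π L hπ x <;> simp [h1, this])]
  by_cases h2 : (QuotientGroup.mk g : G ⧸ L.comap π) = x
  · rw [if_pos ((mk_pi_eq_iff π L hπ g x).mpr h2), if_pos rfl, if_pos h2]
  · rw [if_neg (fun hc => h2 ((mk_pi_eq_iff π L hπ g x).mp hc)), if_neg h2]

/-- Transfer of the `(2,1)`-norm. -/
lemma norm21_push (hπ : Function.Surjective π) (f : G → ℂ)
    (hf : (Function.support f).Finite) :
    norm21 (L.comap π) f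
      = norm21 L (fun q => ((push π (fun g => ‖f g‖) q : ℝ) : ℂ)) := by
  rw [norm21_def, norm21_def]
  congr 1
  have habs : (fun q : Q => ‖((push π (fun g => ‖f g‖) q : ℝ) : ℂ)‖)
      = push π (fun g => ‖f g‖) := by
    funext q
    rw [Complex.norm_real, Real.norm_eq_abs,
      abs_of_nonneg (push_nonneg π (fun g => norm_nonneg _) q)]
  rw [show (∑' y : Q ⧸ L, (fiberSum L (fun q => ‖((push π (fun g => ‖f g‖) q : ℝ) : ℂ)‖) y) ^ 2)
      = ∑' y : Q ⧸ L, (fiberSum L (push π (fun g => ‖f g‖)) y) ^ 2 by rw [habs]]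
  rw [← (qe π L hπ).tsum_eq (fun y => (fiberSum L (push π (fun g => ‖f g‖)) y) ^ 2)]
  refine tsum_congr fun x => ?_
  rw [fiberSum_push π L hπ _ (by rw [abs_support]; exact hf)]

end Transfer

section Conv

variable {K : Type*} [Group K]

lemma conv_support (a φ : K → ℝ) :
    Function.support (conv a φ) ⊆ Function.support a * Function.support φ := by
  intro g hg
  rw [Function.mem_support] at hg
  by_contra h
  apply hg
  have hz : ∀ y : K, a y * φ (y⁻¹ * g) = 0 := by
    intro y
    by_contra hy
    have h1 : a y ≠ 0 := fun h0 => hy (by rw [h0, zero_mul])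
    have h2 : φ (y⁻¹ * g) ≠ 0 := fun h0 => hy (by rw [h0, mul_zero])
    exact h ⟨y, h1, y⁻¹ * g, h2, by group⟩
  calc conv a φ g = ∑' y : K, (0 : ℝ) := tsum_congr hz
  _ = 0 := tsum_zero

lemma conv_fin {a φ : K → ℝ} (ha : (Function.support a).Finite)
    (hφ : (Function.support φ).Finite) : (Function.support (conv a φ)).Finite :=
  (ha.mul hφ).subset (conv_support a φ)

lemma conv_nonneg' {a φ : K → ℝ} (ha : ∀ y, 0 ≤ a y) (hφ : ∀ y, 0 ≤ φ y) (g : K) :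
    0 ≤ conv a φ g := tsum_nonneg fun y => mul_nonneg (ha y) (hφ _)

lemma convC_coe (u v : K → ℝ) :
    convC (fun g => ((u g : ℝ) : ℂ)) (fun g => ((v g : ℝ) : ℂ))
      = fun g => ((conv u v g : ℝ) : ℂ) := by
  funext g
  rw [convC, conv, Complex.ofReal_tsum]
  exact tsum_congr fun y => by push_cast; ring

lemma norm_convC_le {f : K → ℂ} {φ : K → ℝ} (hf : (Function.support f).Finite)
    (hφ : ∀ y, 0 ≤ φ y) (g : K) :
    ‖convC f (fun y => ((φ y : ℝ) : ℂ)) g‖ ≤ conv (fun y => ‖f y‖) φ g := by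
  rw [convC]
  refine le_trans (norm_tsum_le_tsum_norm ?_) ?_
  · apply fin_summable
    apply Set.Finite.subset hf
    intro y hy
    rw [Function.mem_support] at hy ⊢
    intro h0; apply hy; rw [h0, zero_mul, norm_zero]
  · rw [conv]
    refine le_of_eq (tsum_congr fun y => ?_)
    rw [norm_mul, Complex.norm_real, Real.norm_eq_abs, abs_of_nonneg (hφ _)]

variable {G Q : Type*} [Group G] [Group Q] (π : G →* Q)

/-- Push-forward intertwines convolution. -/
lemma push_conv {a φ : G → ℝ} (ha : (Function.support a).Finite)
    (hφ : (Function.support φ).Finite) :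
    push π (conv a φ) = conv (push π a) (push π φ) := by
  funext q
  -- LHS
  have lhs1 : push π (conv a φ) q
      = ∑' g : G, ∑' y : G, (if π g = q then a y * φ (y⁻¹ * g) else 0) := by
    rw [push_apply']
    refine tsum_congr fun g => ?_
    by_cases h : π g = q
    · simp only [h, if_true]; rw [conv]
    · simp [h]
  have hsumL : Summable (Function.uncurry fun (y g : G) =>
      (if π g = q then a y * φ (y⁻¹ * g) else 0)) := by
    apply fin_summable₂ (s := Function.support a)
      (t := Function.support a * Function.support φ) _ ha (ha.mul hφ)
    rintro ⟨y, g⟩ hyg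
    rw [Function.mem_support, Function.uncurry_apply_pair] at hyg
    by_cases h1 : π g = q
    · rw [if_pos h1] at hyg
      have h2 : a y ≠ 0 := fun h0 => hyg (by rw [h0, zero_mul])
      have h3 : φ (y⁻¹ * g) ≠ 0 := fun h0 => hyg (by rw [h0, mul_zero])
      exact ⟨h2, ⟨y, h2, y⁻¹ * g, h3, by group⟩⟩
    · rw [if_neg h1] at hyg; exact absurd rfl hyg
  have lhs2 : push π (conv a φ) q
      = ∑' y : G, a y * push π φ ((π y)⁻¹ * q) := by
    rw [lhs1, Summable.tsum_comm hsumL]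
    refine tsum_congr fun y => ?_
    rw [← (Equiv.mulLeft y).tsum_eq (fun g => if π g = q then a y * φ (y⁻¹ * g) else 0)]
    have : ∀ z : G, (if π (y * z) = q then a y * φ (y⁻¹ * (y * z)) else 0)
        = a y * (if π z = (π y)⁻¹ * q then φ z else 0) := by
      intro z
      have hc : (π (y * z) = q) ↔ (π z = (π y)⁻¹ * q) := by
        rw [map_mul]
        constructor
        · intro h; rw [← h]; group
        · intro h; rw [h]; group
      by_cases h : π (y * z) = q
      · rw [if_pos h, if_pos (hc.mp h)]
        congr 1
        group
      · rw [if_neg h, if_neg (fun hz => h (hc.mpr hz)), mul_zero]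
    have := tsum_congr (L := SummationFilter.unconditional G) this
    simp only [Equiv.coe_mulLeft] at this ⊢
    exact this.trans (by rw [tsum_mul_left, push_apply'])
  -- RHS
  have rhs1 : conv (push π a) (push π φ) q
      = ∑' p : Q, ∑' y : G, (if π y = p then a y else 0) * push π φ (p⁻¹ * q) := by
    rw [conv]
    refine tsum_congr fun p => ?_
    rw [push_apply' π a p, ← tsum_mul_right]
  have hsumR : Summable (Function.uncurry fun (y : G) (p : Q) =>
      (if π y = p then a y else 0) * push π φ (p⁻¹ * q)) := by
    apply fin_summable₂ (s := Function.support a) (t := π '' Function.support a) _ ha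
      (ha.image π)
    rintro ⟨y, p⟩ hyp
    rw [Function.mem_support, Function.uncurry_apply_pair] at hyp
    by_cases h1 : π y = p
    · rw [if_pos h1] at hyp
      have h2 : a y ≠ 0 := fun h0 => hyp (by rw [h0, zero_mul])
      exact ⟨h2, ⟨y, h2, h1⟩⟩
    · rw [if_neg h1, zero_mul] at hyp; exact absurd rfl hyp
  rw [lhs2, rhs1, Summable.tsum_comm hsumR]
  refine tsum_congr fun y => ?_
  rw [tsum_eq_single (π y) (fun p hp => by rw [if_neg (fun h => hp h.symm), zero_mul]),
    if_pos rfl]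

end Conv

section UB

variable {K : Type*} [Group K] (N : Subgroup K)

lemma quot_smul_cond (p z : K) (x : K ⧸ N) :
    ((QuotientGroup.mk (p * z) : K ⧸ N) = x) ↔ (QuotientGroup.mk z : K ⧸ N) = p⁻¹ • x := by
  constructor
  · intro h
    rw [← h]
    rw [show ((QuotientGroup.mk (p * z) : K ⧸ N)) = p • (QuotientGroup.mk z : K ⧸ N) from rfl,
      inv_smul_smul]
  · intro h
    have : (p : K) • (QuotientGroup.mk z : K ⧸ N) = p • (p⁻¹ • x) := by rw [h]
    rw [smul_inv_smul] at this
    exact this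

/-- Coset sums of a convolution. -/
lemma fiberSum_conv {a ψ : K → ℝ} (ha : (Function.support a).Finite)
    (hψ : (Function.support ψ).Finite) (x : K ⧸ N) :
    fiberSum N (conv a ψ) x = ∑' p : K, a p * fiberSum N ψ (p⁻¹ • x) := by
  have lhs1 : fiberSum N (conv a ψ) x
      = ∑' g : K, ∑' y : K, (if (QuotientGroup.mk g : K ⧸ N) = x then a y * ψ (y⁻¹ * g) else 0) := by
    rw [fiberSum_apply']
    refine tsum_congr fun g => ?_
    by_cases h : (QuotientGroup.mk g : K ⧸ N) = x
    · simp only [h, if_true]; rw [conv]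
    · simp [h]
  have hsumL : Summable (Function.uncurry fun (y g : K) =>
      (if (QuotientGroup.mk g : K ⧸ N) = x then a y * ψ (y⁻¹ * g) else 0)) := by
    apply fin_summable₂ (s := Function.support a)
      (t := Function.support a * Function.support ψ) _ ha (ha.mul hψ)
    rintro ⟨y, g⟩ hyg
    rw [Function.mem_support, Function.uncurry_apply_pair] at hyg
    by_cases h1 : (QuotientGroup.mk g : K ⧸ N) = x
    · rw [if_pos h1] at hyg
      have h2 : a y ≠ 0 := fun h0 => hyg (by rw [h0, zero_mul])
      have h3 : ψ (y⁻¹ * g) ≠ 0 := fun h0 => hyg (by rw [h0, mul_zero])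
      exact ⟨h2, ⟨y, h2, y⁻¹ * g, h3, by group⟩⟩
    · rw [if_neg h1] at hyg; exact absurd rfl hyg
  rw [lhs1, Summable.tsum_comm hsumL]
  refine tsum_congr fun y => ?_
  rw [← (Equiv.mulLeft y).tsum_eq
    (fun g => if (QuotientGroup.mk g : K ⧸ N) = x then a y * ψ (y⁻¹ * g) else 0)]
  have hterm : ∀ z : K, (if (QuotientGroup.mk (y * z) : K ⧸ N) = x then a y * ψ (y⁻¹ * (y * z)) else 0)
      = a y * (if (QuotientGroup.mk z : K ⧸ N) = y⁻¹ • x then ψ z else 0) := by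
    intro z
    by_cases h : (QuotientGroup.mk (y * z) : K ⧸ N) = x
    · rw [if_pos h, if_pos ((quot_smul_cond N y z x).mp h)]
      congr 1
      group
    · rw [if_neg h, if_neg (fun hz => h ((quot_smul_cond N y z x).mpr hz)), mul_zero]
  have h2 := tsum_congr (L := SummationFilter.unconditional K) hterm
  simp only [Equiv.coe_mulLeft] at h2 ⊢
  exact h2.trans (by rw [tsum_mul_left, fiberSum_apply'])

/-- Uniform bound on the Haagerup competitors: `‖a ∗ ψ‖_{(2,1)} ≤ ‖a‖₁`. -/
lemma norm21_conv_le {a ψ : K → ℝ} (ha0 : ∀ g, 0 ≤ a g) (ha : (Function.support a).Finite)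
    (hψ0 : ∀ g, 0 ≤ ψ g) (hψ : (Function.support ψ).Finite)
    (hψ1 : norm21 N (fun g => ((ψ g : ℝ) : ℂ)) ≤ 1) :
    norm21 N (fun g => ((conv a ψ g : ℝ) : ℂ)) ≤ ∑' g : K, a g := by
  classical
  set I := fiberSum N ψ with hI
  have hI0 : ∀ x, 0 ≤ I x := fiberSum_nonneg N hψ0
  have hIfin : (Function.support I).Finite := (hψ.image _).subset (fiberSum_support N ψ)
  have habsψ : (fun g => ‖((ψ g : ℝ) : ℂ)‖) = ψ := by
    funext g; rw [Complex.norm_real, Real.norm_eq_abs, abs_of_nonneg (hψ0 g)]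
  have hI2sum : Summable fun x => I x ^ 2 := fiberSum_sq_summable N hψ
  have hI2 : ∑' x : K ⧸ N, I x ^ 2 ≤ 1 := by
    have h0 : 0 ≤ ∑' x : K ⧸ N, I x ^ 2 := tsum_nonneg fun x => sq_nonneg _
    have hsq : Real.sqrt (∑' x : K ⧸ N, I x ^ 2) ≤ 1 := by
      have := hψ1
      rw [norm21_def, habsψ] at this
      exact this
    calc ∑' x : K ⧸ N, I x ^ 2 = Real.sqrt (∑' x : K ⧸ N, I x ^ 2) ^ 2 := (Real.sq_sqrt h0).symm
    _ ≤ 1 ^ 2 := pow_le_pow_left₀ (Real.sqrt_nonneg _) hsq 2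
    _ = 1 := one_pow 2
  set M := ∑' g : K, a g with hM
  have hM0 : 0 ≤ M := tsum_nonneg ha0
  have ha_sum : Summable a := fin_summable ha
  set A := ha.toFinset with hA
  have haA : ∀ p ∉ A, a p = 0 := fun p hp => by
    by_contra h; exact hp (ha.mem_toFinset.mpr h)
  have hMA : M = ∑ p ∈ A, a p := tsum_eq_sum haA
  set J := fiberSum N (conv a ψ) with hJ
  have hJconv : ∀ x, J x = ∑' p : K, a p * I (p⁻¹ • x) := fun x => fiberSum_conv N ha hψ x
  have hJA : ∀ x, J x = ∑ p ∈ A, a p * I (p⁻¹ • x) := by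
    intro x
    rw [hJconv x]
    exact tsum_eq_sum fun p hp => by rw [haA p hp, zero_mul]
  have hKA : ∀ x, ∑' p : K, a p * I (p⁻¹ • x) ^ 2 = ∑ p ∈ A, a p * I (p⁻¹ • x) ^ 2 := by
    intro x
    exact tsum_eq_sum fun p hp => by rw [haA p hp, zero_mul]
  -- Cauchy-Schwarz
  have key : ∀ x : K ⧸ N, J x ^ 2 ≤ M * ∑' p : K, a p * I (p⁻¹ • x) ^ 2 := by
    intro x
    rw [hJA x, hKA x, hMA]
    have hcs := Finset.sum_mul_sq_le_sq_mul_sq A (fun p => Real.sqrt (a p))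
      (fun p => Real.sqrt (a p) * I (p⁻¹ • x))
    have h1 : ∀ p ∈ A, Real.sqrt (a p) * (Real.sqrt (a p) * I (p⁻¹ • x)) = a p * I (p⁻¹ • x) := by
      intro p _
      rw [← mul_assoc, Real.mul_self_sqrt (ha0 p)]
    have h2 : ∀ p ∈ A, Real.sqrt (a p) ^ 2 = a p := fun p _ => Real.sq_sqrt (ha0 p)
    have h3 : ∀ p ∈ A, (Real.sqrt (a p) * I (p⁻¹ • x)) ^ 2 = a p * I (p⁻¹ • x) ^ 2 := by
      intro p _
      rw [mul_pow, Real.sq_sqrt (ha0 p)]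
    rw [Finset.sum_congr rfl h1, Finset.sum_congr rfl h2, Finset.sum_congr rfl h3] at hcs
    exact hcs
  -- supports
  have hconvfin : (Function.support (conv a ψ)).Finite := conv_fin ha hψ
  have hJfin : (Function.support J).Finite := (hconvfin.image _).subset (fiberSum_support N _)
  have hKfin : (Function.support fun x : K ⧸ N => ∑' p : K, a p * I (p⁻¹ • x) ^ 2).Finite := by
    apply Set.Finite.subset (Set.Finite.image2 (fun p z => p • z) ha hIfin)
    intro x hx
    rw [Function.mem_support] at hx
    have : ∃ p : K, a p * I (p⁻¹ • x) ^ 2 ≠ 0 := by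
      by_contra hc
      push_neg at hc
      apply hx
      calc ∑' p : K, a p * I (p⁻¹ • x) ^ 2 = ∑' p : K, (0 : ℝ) := tsum_congr fun p => by
            simpa using hc p
      _ = 0 := tsum_zero
    obtain ⟨p, hp⟩ := this
    have hap : a p ≠ 0 := fun h0 => hp (by rw [h0, zero_mul])
    have hIp : I (p⁻¹ • x) ≠ 0 := fun h0 => hp (by rw [h0]; ring_nf)
    exact ⟨p, hap, p⁻¹ • x, hIp, smul_inv_smul p x⟩
  -- sum the key inequality
  have hsum1 : ∑' x : K ⧸ N, J x ^ 2
      ≤ ∑' x : K ⧸ N, M * ∑' p : K, a p * I (p⁻¹ • x) ^ 2 := by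
    refine Summable.tsum_le_tsum key (fiberSum_sq_summable N hconvfin) ?_
    exact fin_summable (hKfin.subset (Function.support_mul_subset_right _ _))
  have hswap : Summable (Function.uncurry fun (p : K) (x : K ⧸ N) => a p * I (p⁻¹ • x) ^ 2) := by
    apply fin_summable₂ (s := Function.support a)
      (t := Set.image2 (fun p z => p • z) (Function.support a) (Function.support I)) _ ha
      (Set.Finite.image2 _ ha hIfin)
    rintro ⟨p, x⟩ hpx
    rw [Function.mem_support, Function.uncurry_apply_pair] at hpx
    have hap : a p ≠ 0 := fun h0 => hpx (by rw [h0, zero_mul])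
    have hIp : I (p⁻¹ • x) ≠ 0 := fun h0 => hpx (by rw [h0]; ring_nf)
    exact ⟨hap, ⟨p, hap, p⁻¹ • x, hIp, smul_inv_smul p x⟩⟩
  have hsum2 : ∑' x : K ⧸ N, ∑' p : K, a p * I (p⁻¹ • x) ^ 2 ≤ M := by
    rw [Summable.tsum_comm hswap]
    have hinner : ∀ p : K, ∑' x : K ⧸ N, a p * I (p⁻¹ • x) ^ 2 ≤ a p := by
      intro p
      rw [tsum_mul_left]
      have hre : ∑' x : K ⧸ N, I (p⁻¹ • x) ^ 2 = ∑' x : K ⧸ N, I x ^ 2 := by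
        exact (MulAction.toPerm (p⁻¹ : K) : Equiv.Perm (K ⧸ N)).tsum_eq fun x => I x ^ 2
      rw [hre]
      calc a p * ∑' x : K ⧸ N, I x ^ 2 ≤ a p * 1 :=
            mul_le_mul_of_nonneg_left hI2 (ha0 p)
      _ = a p := mul_one _
    refine le_trans (Summable.tsum_le_tsum hinner ?_ ha_sum) le_rfl
    · apply fin_summable
      apply Set.Finite.subset ha
      intro p hp
      rw [Function.mem_support] at hp ⊢
      intro h0
      apply hp
      have : ∀ x : K ⧸ N, a p * I (p⁻¹ • x) ^ 2 = 0 := fun x => by rw [h0, zero_mul]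
      calc ∑' x : K ⧸ N, a p * I (p⁻¹ • x) ^ 2 = ∑' x : K ⧸ N, (0:ℝ) := tsum_congr this
      _ = 0 := tsum_zero
  have htot : ∑' x : K ⧸ N, J x ^ 2 ≤ M * M := by
    refine le_trans hsum1 ?_
    rw [tsum_mul_left]
    exact mul_le_mul_of_nonneg_left hsum2 hM0
  -- conclude
  have habsconv : (fun g => ‖((conv a ψ g : ℝ) : ℂ)‖) = conv a ψ := by
    funext g
    rw [Complex.norm_real, Real.norm_eq_abs, abs_of_nonneg (conv_nonneg' ha0 hψ0 g)]
  rw [norm21_def, habsconv]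
  calc Real.sqrt (∑' x : K ⧸ N, J x ^ 2) ≤ Real.sqrt (M * M) := Real.sqrt_le_sqrt htot
  _ = M := Real.sqrt_mul_self hM0

end UB

section KeyTransfer

variable {G Q : Type*} [Group G] [Group Q]

lemma support_coe (u : Q → ℝ) :
    Function.support (fun q => ((u q : ℝ) : ℂ)) = Function.support u := by
  ext q; simp [Function.support]

/-- The main transfer inequality for Haagerup-type norms. -/
lemma hNorm_transfer (π : G →* Q) (hπ : Function.Surjective π) (L : Subgroup Q)
    {C : ℝ} (hC : 0 < C) (wQ : Q → ℝ) (hwQ0 : ∀ q, 0 ≤ wQ q)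
    (hQ : ∀ F : Q → ℂ, (Function.support F).Finite →
      hNorm L F ≤ C * norm21 L (fun q => F q * ((wQ q : ℝ) : ℂ)))
    (wG : G → ℝ) (hwG0 : ∀ g, 0 ≤ wG g) (hpw : ∀ g, wQ (π g) ≤ wG g)
    (f : G → ℂ) (hf : (Function.support f).Finite) :
    hNorm (L.comap π) f ≤ C * norm21 (L.comap π) (fun g => f g * ((wG g : ℝ) : ℂ)) := by
  classical
  set A : G → ℝ := fun g => ‖f g‖ with hA
  have hA0 : ∀ g, 0 ≤ A g := fun g => norm_nonneg _
  have hAfin : (Function.support A).Finite := by rw [hA, abs_support]; exact hf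
  set F : Q → ℝ := push π A with hF
  have hF0 : ∀ q, 0 ≤ F q := push_nonneg π hA0
  have hFfin : (Function.support F).Finite := (hAfin.image π).subset (push_support π A)
  set Fc : Q → ℂ := fun q => ((F q : ℝ) : ℂ) with hFc
  have hFcfin : (Function.support Fc).Finite := by rw [hFc, support_coe]; exact hFfin
  refine Real.sSup_le ?_ (mul_nonneg hC.le (norm21_nonneg _ _))
  rintro r ⟨φ, hφfin, hφ0, hφn, rfl⟩
  set ψ : Q → ℝ := push π φ with hψ
  have hψ0 : ∀ q, 0 ≤ ψ q := push_nonneg π hφ0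
  have hψfin : (Function.support ψ).Finite := (hφfin.image π).subset (push_support π φ)
  have hφcfin : (Function.support fun g => ((φ g : ℝ) : ℂ)).Finite := by
    rw [support_coe]; exact hφfin
  have habsφ : push π (fun g => ‖((φ g : ℝ) : ℂ)‖) = ψ := by
    rw [hψ]
    have hfun : (fun g => ‖((φ g : ℝ) : ℂ)‖) = φ := by
      funext g
      rw [Complex.norm_real, Real.norm_eq_abs, abs_of_nonneg (hφ0 g)]
    rw [hfun]
  have hψn : norm21 L (fun q => ((ψ q : ℝ) : ℂ)) ≤ 1 := by
    have h1 := norm21_push π L hπ (fun g => ((φ g : ℝ) : ℂ)) hφcfin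
    rw [habsφ] at h1
    rw [← h1]
    exact hφn
  -- Step 1 : bound the convolution by the nonnegative real convolution
  have hconvfin : (Function.support (conv A φ)).Finite := conv_fin hAfin hφfin
  have hconv0 : ∀ g, 0 ≤ conv A φ g := conv_nonneg' hA0 hφ0
  have step1 : norm21 (L.comap π) (convC f fun g => ((φ g : ℝ) : ℂ))
      ≤ norm21 (L.comap π) (fun g => ((conv A φ g : ℝ) : ℂ)) := by
    refine norm21_mono _ (fun g => ?_) (by rw [support_coe]; exact hconvfin)
    rw [Complex.norm_real, Real.norm_eq_abs, abs_of_nonneg (hconv0 g)]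
    exact norm_convC_le hf hφ0 g
  -- Step 2 : transfer to Q
  have habsconv : push π (fun g => ‖((conv A φ g : ℝ) : ℂ)‖) = conv F ψ := by
    rw [← push_conv π hAfin hφfin]
    have hfun : (fun g => ‖((conv A φ g : ℝ) : ℂ)‖) = conv A φ := by
      funext g
      rw [Complex.norm_real, Real.norm_eq_abs, abs_of_nonneg (hconv0 g)]
    rw [hfun]
  have step2 : norm21 (L.comap π) (fun g => ((conv A φ g : ℝ) : ℂ))
      = norm21 L (convC Fc fun q => ((ψ q : ℝ) : ℂ)) := by
    rw [norm21_push π L hπ _ (by rw [support_coe]; exact hconvfin), habsconv,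
      hFc, convC_coe, ← push_conv π hAfin hφfin, push_conv π hAfin hφfin]
  -- Step 3 : the transferred value is a Q-side competitor
  have hmem : norm21 L (convC Fc fun q => ((ψ q : ℝ) : ℂ)) ∈
      {r : ℝ | ∃ φ' : Q → ℝ, (Function.support φ').Finite ∧ (∀ y, 0 ≤ φ' y) ∧
        norm21 L (fun q => ((φ' q : ℝ) : ℂ)) ≤ 1 ∧
        r = norm21 L (convC Fc (fun q => ((φ' q : ℝ) : ℂ)))} :=
    ⟨ψ, hψfin, hψ0, hψn, rfl⟩
  have hbdd : BddAbove {r : ℝ | ∃ φ' : Q → ℝ, (Function.support φ').Finite ∧ (∀ y, 0 ≤ φ' y) ∧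
      norm21 L (fun q => ((φ' q : ℝ) : ℂ)) ≤ 1 ∧
      r = norm21 L (convC Fc (fun q => ((φ' q : ℝ) : ℂ)))} := by
    refine ⟨∑' q : Q, F q, ?_⟩
    rintro r' ⟨ψ', h1', h2', h3', rfl⟩
    rw [hFc, convC_coe]
    exact norm21_conv_le L hF0 hFfin h2' h1' h3'
  have step3 : norm21 L (convC Fc fun q => ((ψ q : ℝ) : ℂ)) ≤ hNorm L Fc :=
    le_csSup hbdd hmem
  -- Step 4 : apply the Q-side hypothesis
  have step4 : hNorm L Fc ≤ C * norm21 L (fun q => Fc q * ((wQ q : ℝ) : ℂ)) := hQ Fc hFcfin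
  -- Step 5 : compare weighted norms
  have hAw0 : ∀ g, 0 ≤ A g * wG g := fun g => mul_nonneg (hA0 g) (hwG0 g)
  have hAwfin : (Function.support fun g => A g * wG g).Finite := by
    apply hAfin.subset
    exact Function.support_mul_subset_left _ _
  have hpush_fw : push π (fun g => ‖f g * ((wG g : ℝ) : ℂ)‖) = push π (fun g => A g * wG g) := by
    have hfun : (fun g => ‖f g * ((wG g : ℝ) : ℂ)‖) = fun g => A g * wG g := by
      funext g
      rw [norm_mul, Complex.norm_real, Real.norm_eq_abs, abs_of_nonneg (hwG0 g)]
    rw [hfun]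
  have hfwfin : (Function.support fun g => f g * ((wG g : ℝ) : ℂ)).Finite := by
    apply hf.subset
    exact Function.support_mul_subset_left _ _
  have step5 : norm21 L (fun q => Fc q * ((wQ q : ℝ) : ℂ))
      ≤ norm21 (L.comap π) (fun g => f g * ((wG g : ℝ) : ℂ)) := by
    rw [norm21_push π L hπ _ hfwfin, hpush_fw]
    refine norm21_mono L (fun q => ?_) (by
      rw [support_coe]
      exact ((hAwfin.image π).subset (push_support π _)))
    have hn1 : ‖Fc q * ((wQ q : ℝ) : ℂ)‖ = F q * wQ q := by
      rw [hFc, norm_mul, Complex.norm_real, Complex.norm_real, Real.norm_eq_abs,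
        Real.norm_eq_abs, abs_of_nonneg (hF0 q), abs_of_nonneg (hwQ0 q)]
    have hn2 : ‖((push π (fun g => A g * wG g) q : ℝ) : ℂ)‖
        = push π (fun g => A g * wG g) q := by
      rw [Complex.norm_real, Real.norm_eq_abs,
        abs_of_nonneg (push_nonneg π hAw0 q)]
    rw [hn1, hn2]
    -- pointwise inequality between the pushed weights
    have e1 : F q * wQ q = ∑' g : G, (if π g = q then A g * wQ q else 0) := by
      rw [hF, push_apply', ← tsum_mul_right]
      exact tsum_congr fun g => by by_cases h : π g = q <;> simp [h]
    have e2 : push π (fun g => A g * wG g) q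
        = ∑' g : G, (if π g = q then A g * wG g else 0) := push_apply' π _ q
    rw [e1, e2]
    refine Summable.tsum_le_tsum (fun g => ?_) ?_ ?_
    · by_cases h : π g = q
      · rw [if_pos h, if_pos h, ← h]
        exact mul_le_mul_of_nonneg_left (hpw g) (hA0 g)
      · rw [if_neg h, if_neg h]
    · apply fin_summable
      apply hAfin.subset
      intro g hg
      rw [Function.mem_support] at hg ⊢
      intro h0
      apply hg
      by_cases h : π g = q <;> simp [h, h0]
    · apply fin_summable
      apply hAfin.subset
      intro g hg
      rw [Function.mem_support] at hg ⊢
      intro h0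
      apply hg
      by_cases h : π g = q <;> simp [h, h0]
  calc norm21 (L.comap π) (convC f fun g => ((φ g : ℝ) : ℂ))
      ≤ norm21 L (convC Fc fun q => ((ψ q : ℝ) : ℂ)) := step2 ▸ step1
  _ ≤ hNorm L Fc := step3
  _ ≤ C * norm21 L (fun q => Fc q * ((wQ q : ℝ) : ℂ)) := step4
  _ ≤ C * norm21 (L.comap π) (fun g => f g * ((wG g : ℝ) : ℂ)) :=
      mul_le_mul_of_nonneg_left step5 hC.le

end KeyTransfer

section Words

variable {K : Type*} [Group K]

lemma exists_word {T : Set K} (hsym : ∀ s ∈ T, s⁻¹ ∈ T) (hgen : Subgroup.closure T = ⊤)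
    (g : K) : ∃ l : List K, (∀ s ∈ l, s ∈ T) ∧ l.prod = g := by
  have hg : g ∈ Subgroup.closure T := by rw [hgen]; trivial
  have hg' : g ∈ Submonoid.closure (T ∪ T⁻¹) := by
    rw [← Subgroup.closure_toSubmonoid]
    exact hg
  obtain ⟨l, hl, hp⟩ := Submonoid.exists_list_of_mem_closure hg'
  refine ⟨l, fun s hs => ?_, hp⟩
  rcases hl s hs with h | h
  · exact h
  · have h1 : s⁻¹ ∈ T := Set.mem_inv.mp h
    simpa using hsym s⁻¹ h1

lemma wordLength_le {T : Set K} {g : K} (l : List K) (h1 : ∀ s ∈ l, s ∈ T)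
    (h2 : l.prod = g) : wordLength T g ≤ l.length :=
  Nat.sInf_le ⟨l, h1, rfl, h2⟩

lemma wordLength_one_le {T : Set K} (t : ℕ) : wordLength T (1 : K) ≤ t :=
  le_trans (wordLength_le [] (by simp) (by simp)) (Nat.zero_le t)

lemma wordLength_spec {T : Set K} (hsym : ∀ s ∈ T, s⁻¹ ∈ T) (hgen : Subgroup.closure T = ⊤)
    (g : K) : ∃ l : List K, (∀ s ∈ l, s ∈ T) ∧ l.length = wordLength T g ∧ l.prod = g := by
  have hne : {n : ℕ | ∃ l : List K, (∀ s ∈ l, s ∈ T) ∧ l.length = n ∧ l.prod = g}.Nonempty := by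
    obtain ⟨l, h1, h2⟩ := exists_word hsym hgen g
    exact ⟨l.length, l, h1, rfl, h2⟩
  exact Nat.sInf_mem hne

lemma wordLength_map_le {K' : Type*} [Group K'] (π : K →* K') {T : Set K}
    (hsym : ∀ s ∈ T, s⁻¹ ∈ T) (hgen : Subgroup.closure T = ⊤) (g : K) :
    wordLength (π '' T) (π g) ≤ wordLength T g := by
  obtain ⟨l, h1, h2, h3⟩ := wordLength_spec hsym hgen g
  have := wordLength_le (T := π '' T) (g := π g) (l.map π)
    (fun s hs => by
      obtain ⟨t, ht, rfl⟩ := List.mem_map.mp hs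
      exact ⟨t, h1 t ht, rfl⟩)
    (by rw [← map_list_prod π l, h3])
  simpa [h2] using this

lemma finite_lists {T : Set K} (hT : T.Finite) :
    ∀ t : ℕ, {l : List K | (∀ s ∈ l, s ∈ T) ∧ l.length ≤ t}.Finite := by
  intro t
  induction t with
  | zero =>
    apply Set.Finite.subset (Set.finite_singleton ([] : List K))
    rintro l ⟨-, h2⟩
    simp only [Nat.le_zero, List.length_eq_zero_iff] at h2
    simp [h2]
  | succ t ih =>
    apply Set.Finite.subset (Set.Finite.insert ([] : List K) (Set.Finite.image2 List.cons hT ih))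
    rintro l ⟨h1, h2⟩
    cases l with
    | nil => exact Set.mem_insert _ _
    | cons a l' =>
      refine Set.mem_insert_iff.mpr (Or.inr ?_)
      refine ⟨a, h1 a (List.mem_cons_self), l', ⟨fun s hs => h1 s (List.mem_cons_of_mem a hs),
        ?_⟩, rfl⟩
      simpa [Nat.succ_le_succ_iff] using h2

lemma ball_finite {T : Set K} (hT : T.Finite) (hsym : ∀ s ∈ T, s⁻¹ ∈ T)
    (hgen : Subgroup.closure T = ⊤) (t : ℕ) : {q : K | wordLength T q ≤ t}.Finite := by
  apply Set.Finite.subset ((finite_lists hT t).image List.prod)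
  intro q hq
  obtain ⟨l, h1, h2, h3⟩ := wordLength_spec hsym hgen q
  exact ⟨l, ⟨h1, h2.le.trans hq⟩, h3⟩

end Words

end Aux15

/-- Let `π : G → Q` be a surjective homomorphism, `G` generated by a
finite symmetric set `S` with word length `ℓ_G`, `Q` equipped with the generating set
`π(S)` and its word length `ℓ_Q`. Let `L ≤ Q` and `H = π⁻¹(L)`. If `(Q,L)` has pair
rapid decay then `(G,H)` has pair rapid decay, and if `(Q,L) ∈ SLC_subexp` then
`(G,H) ∈ SLC_subexp`. -/
theorem statement15 {G Q : Type*} [Group G] [Group Q] [Countable G] [Countable Q]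
    (π : G →* Q) (hπ : Function.Surjective π)
    (S : Finset G) (hSsym : ∀ s ∈ S, s⁻¹ ∈ S)
    (hSgen : Subgroup.closure (S : Set G) = ⊤)
    (L : Subgroup Q) :
    (PaperRD.HasPairRD L (PaperRD.wordLength (π '' (S : Set G))) →
      PaperRD.HasPairRD (L.comap π) (PaperRD.wordLength (S : Set G))) ∧
    (PaperRD.SLCsubexp L (PaperRD.wordLength (π '' (S : Set G))) →
      PaperRD.SLCsubexp (L.comap π) (PaperRD.wordLength (S : Set G))) := by
  classical
  have hsymS : ∀ s ∈ (S : Set G), s⁻¹ ∈ (S : Set G) := fun s hs => hSsym s hs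
  have hlen : ∀ g : G, PaperRD.wordLength (π '' (S : Set G)) (π g)
      ≤ PaperRD.wordLength (S : Set G) g :=
    fun g => wordLength_map_le π hsymS hSgen g
  have hsymQ : ∀ s ∈ π '' (S : Set G), s⁻¹ ∈ π '' (S : Set G) := by
    rintro s ⟨g, hg, rfl⟩
    exact ⟨g⁻¹, hsymS g hg, map_inv π g⟩
  have hgenQ : Subgroup.closure (π '' (S : Set G)) = ⊤ := by
    rw [← MonoidHom.map_closure, hSgen]
    exact Subgroup.map_top_of_surjective π hπ
  constructor
  · rintro ⟨s, hs, C, hC, hbound⟩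
    refine ⟨s, hs, C, hC, fun f hf => ?_⟩
    refine hNorm_transfer π hπ L hC
      (fun q => (1 + (PaperRD.wordLength (π '' (S : Set G)) q : ℝ)) ^ s)
      (fun q => Real.rpow_nonneg (by positivity) _) hbound
      (fun g => (1 + (PaperRD.wordLength (S : Set G) g : ℝ)) ^ s)
      (fun g => Real.rpow_nonneg (by positivity) _) (fun g => ?_) f hf
    refine Real.rpow_le_rpow (by positivity) ?_ hs.le
    have := hlen g
    have : ((PaperRD.wordLength (π '' (S : Set G)) (π g) : ℝ))
        ≤ (PaperRD.wordLength (S : Set G) g : ℝ) := by exact_mod_cast this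
    linarith
  · rintro ⟨C, hC, w, hw1, hbound, htend⟩
    refine ⟨C, hC, fun g => w (π g), fun g => hw1 _, fun f hf => ?_, ?_⟩
    · exact hNorm_transfer π hπ L hC w (fun q => le_trans zero_le_one (hw1 q)) hbound
        (fun g => w (π g)) (fun g => le_trans zero_le_one (hw1 _)) (fun g => le_rfl) f hf
    · -- radial majorant comparison and squeeze
      have hBQfin : ∀ t : ℕ, {q : Q | PaperRD.wordLength (π '' (S : Set G)) q ≤ t}.Finite :=
        fun t => ball_finite (S.finite_toSet.image π) hsymQ hgenQ t
      have hbddQ : ∀ t : ℕ,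
          BddAbove (w '' {q : Q | PaperRD.wordLength (π '' (S : Set G)) q ≤ t}) :=
        fun t => ((hBQfin t).image w).bddAbove
      have hsub : ∀ t : ℕ, (fun g => w (π g)) '' {g : G | PaperRD.wordLength (S : Set G) g ≤ t}
          ⊆ w '' {q : Q | PaperRD.wordLength (π '' (S : Set G)) q ≤ t} := by
        rintro t x ⟨g, hg, rfl⟩
        exact ⟨π g, le_trans (hlen g) hg, rfl⟩
      have hmem1 : ∀ t : ℕ, w (π 1) ∈
          (fun g => w (π g)) '' {g : G | PaperRD.wordLength (S : Set G) g ≤ t} :=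
        fun t => ⟨1, wordLength_one_le t, rfl⟩
      have h1le : ∀ t : ℕ, 1 ≤ PaperRD.radialMaj (PaperRD.wordLength (S : Set G))
          (fun g => w (π g)) t := by
        intro t
        refine le_trans (hw1 (π 1)) (le_csSup ((hbddQ t).mono (hsub t)) (hmem1 t))
      have hle : ∀ t : ℕ, PaperRD.radialMaj (PaperRD.wordLength (S : Set G))
          (fun g => w (π g)) t
          ≤ PaperRD.radialMaj (PaperRD.wordLength (π '' (S : Set G))) w t := by
        intro t
        refine csSup_le ⟨w (π 1), hmem1 t⟩ ?_
        intro x hx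
        exact le_csSup (hbddQ t) (hsub t hx)
      have h1leQ : ∀ t : ℕ, 1 ≤ PaperRD.radialMaj (PaperRD.wordLength (π '' (S : Set G))) w t :=
        fun t => le_trans (h1le t) (hle t)
      refine squeeze_zero (fun t => ?_) (fun t => ?_) htend
      · exact div_nonneg (Real.log_nonneg (h1le t)) (Nat.cast_nonneg t)
      · rcases Nat.eq_zero_or_pos t with h | h
        · subst h; simp
        · have ht : (0 : ℝ) < (t : ℝ) := by exact_mod_cast h
          refine (div_le_div_iff_of_pos_right ht).mpr ?_
          exact Real.log_le_log (lt_of_lt_of_le one_pos (h1le t)) (hle t)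
end
end

section
/- Let M ≤ SL_2(ℤ) be a subgroup all of whose elements are unipotent matrices (i.e. (m − I)² = 0, equivalently every element has trace 2 and determinant 1). Then there exists h ∈ SL_2(ℤ) such that hMh⁻¹ is contained in the group of upper unitriangular matrices {(1 a; 0 1) : a ∈ ℤ}. -/
open Matrix

lemma sl2_unip_struct (A : Matrix (Fin 2) (Fin 2) ℤ) (h : (A - 1) ^ 2 = 0) :
    A 1 1 = 2 - A 0 0 ∧ (A 0 0 - 1) ^ 2 + A 0 1 * A 1 0 = 0 := by
  have h' : (A - 1) * (A - 1) = 0 := by rw [← pow_two]; exact h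
  have e : ∀ i j, ((A - 1) * (A - 1)) i j = 0 := fun i j => by rw [h']; rfl
  have e00 := e 0 0
  have e01 := e 0 1
  have e11 := e 1 1
  simp [Matrix.mul_apply, Fin.sum_univ_two, Matrix.sub_apply, Matrix.one_apply] at e00 e01 e11
  by_cases hs : A 0 0 - 1 + (A 1 1 - 1) = 0
  · exact ⟨by linarith, by nlinarith [e00]⟩
  · have hb : A 0 1 = 0 := by
      rcases mul_eq_zero.1 (show (A 0 1) * (A 0 0 - 1 + (A 1 1 - 1)) = 0 by linarith) with h | h
      · exact h
      · exact absurd h hs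
    have ha : A 0 0 - 1 = 0 := mul_self_eq_zero.1 (by linear_combination e00 - A 1 0 * hb)
    have hd : A 1 1 - 1 = 0 := mul_self_eq_zero.1 (by linear_combination e11 - A 1 0 * hb)
    exact absurd (by linarith) hs

lemma sl2_pair (a b c a' b' c' : ℤ) (h1 : a^2 + b*c = 0) (h2 : a'^2 + b'*c' = 0)
    (h3 : 2*(a*a') + b*c' + c*b' = 0) :
    a*b' = a'*b ∧ a*c' = a'*c ∧ b*c' = -(a*a') ∧ b*c' = c*b' := by
  have hab : a*b' - a'*b = 0 := by
    have : (a*b' - a'*b)^2 = 0 := by linear_combination b'^2*h1 + b^2*h2 - (b*b')*h3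
    exact pow_eq_zero_iff two_ne_zero |>.1 this
  have hac : a*c' - a'*c = 0 := by
    have : (a*c' - a'*c)^2 = 0 := by linear_combination c'^2*h1 + c^2*h2 - (c*c')*h3
    exact pow_eq_zero_iff two_ne_zero |>.1 this
  have hbc : b*c' - c*b' = 0 := by
    have : (b*c' - c*b')^2 = 0 := by
      linear_combination (b*c'+c*b'-2*a*a')*h3 - 4*(b'*c')*h1 + 4*a^2*h2
    exact pow_eq_zero_iff two_ne_zero |>.1 this
  refine ⟨by linarith, by linarith, ?_, by linarith⟩
  have h2' : 2*(b*c') = 2*(-(a*a')) := by linear_combination h3 + hbc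
  exact mul_left_cancel₀ two_ne_zero h2'

/-- Let `M ≤ SL_2(ℤ)` be a subgroup all of whose elements are
unipotent (i.e. `(m - I)² = 0`). Then there exists `h ∈ SL_2(ℤ)` such that
`hMh⁻¹` is contained in the group of upper unitriangular matrices
`{(1 a; 0 1) : a ∈ ℤ}`. -/
theorem statement19 (M : Subgroup (Matrix.SpecialLinearGroup (Fin 2) ℤ))
    (huni : ∀ m ∈ M, ((m : Matrix (Fin 2) (Fin 2) ℤ) - 1) ^ 2 = 0) :
    ∃ h : Matrix.SpecialLinearGroup (Fin 2) ℤ, ∀ m ∈ M, ∃ a : ℤ,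
      ((h * m * h⁻¹ : Matrix.SpecialLinearGroup (Fin 2) ℤ) :
          Matrix (Fin 2) (Fin 2) ℤ) = !![1, a; 0, 1] := by
  have struct : ∀ m ∈ M, ((m : Matrix (Fin 2) (Fin 2) ℤ)) 1 1 =
      2 - ((m : Matrix (Fin 2) (Fin 2) ℤ)) 0 0 ∧
      (((m : Matrix (Fin 2) (Fin 2) ℤ)) 0 0 - 1) ^ 2 +
        ((m : Matrix (Fin 2) (Fin 2) ℤ)) 0 1 * ((m : Matrix (Fin 2) (Fin 2) ℤ)) 1 0 = 0 :=
    fun m hm => sl2_unip_struct _ (huni m hm)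
  by_cases htriv : ∀ m ∈ M, m = 1
  · refine ⟨1, fun m hm => ⟨0, ?_⟩⟩
    rw [htriv m hm]
    simp [Matrix.one_fin_two]
  · push_neg at htriv
    obtain ⟨m₀, hm₀M, hm₀⟩ := htriv
    set a := ((m₀ : Matrix (Fin 2) (Fin 2) ℤ)) 0 0 - 1 with ha
    set b := ((m₀ : Matrix (Fin 2) (Fin 2) ℤ)) 0 1 with hb
    set c := ((m₀ : Matrix (Fin 2) (Fin 2) ℤ)) 1 0 with hc
    obtain ⟨hd0, he0⟩ := struct m₀ hm₀M
    have key : ∀ m' ∈ M,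
        a * ((m' : Matrix (Fin 2) (Fin 2) ℤ)) 0 1 =
          (((m' : Matrix (Fin 2) (Fin 2) ℤ)) 0 0 - 1) * b ∧
        a * ((m' : Matrix (Fin 2) (Fin 2) ℤ)) 1 0 =
          (((m' : Matrix (Fin 2) (Fin 2) ℤ)) 0 0 - 1) * c ∧
        b * ((m' : Matrix (Fin 2) (Fin 2) ℤ)) 1 0 =
          -(a * (((m' : Matrix (Fin 2) (Fin 2) ℤ)) 0 0 - 1)) ∧
        b * ((m' : Matrix (Fin 2) (Fin 2) ℤ)) 1 0 =
          c * ((m' : Matrix (Fin 2) (Fin 2) ℤ)) 0 1 := by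
      intro m' hm'
      obtain ⟨hd', he'⟩ := struct m' hm'
      obtain ⟨hdp, -⟩ := struct (m₀ * m') (mul_mem hm₀M hm')
      rw [Matrix.SpecialLinearGroup.coe_mul] at hdp
      rw [Matrix.mul_apply, Matrix.mul_apply, Fin.sum_univ_two, Fin.sum_univ_two] at hdp
      rw [hd0, hd'] at hdp
      exact sl2_pair a b c _ _ _ (by linear_combination he0) (by linear_combination he')
        (by linear_combination hdp)
    have hnz : ¬(a = 0 ∧ b = 0 ∧ c = 0) := by
      rintro ⟨h1, h2, h3⟩
      have hm : (m₀ : Matrix (Fin 2) (Fin 2) ℤ) = 1 := by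
        ext i j
        fin_cases i <;> fin_cases j <;> simp [Matrix.one_apply] <;>
          linarith [ha, h1, hb, h2, hc, h3, hd0]
      exact hm₀ (Subtype.coe_injective
        (hm.trans Matrix.SpecialLinearGroup.coe_one.symm))
    obtain ⟨p, q, r, s, hdet, hker⟩ :
        ∃ p q r s : ℤ, p * r + s * q = 1 ∧ ∀ m' ∈ M,
          (((m' : Matrix (Fin 2) (Fin 2) ℤ)) 0 0 - 1) * p +
            ((m' : Matrix (Fin 2) (Fin 2) ℤ)) 0 1 * q = 0 ∧
          ((m' : Matrix (Fin 2) (Fin 2) ℤ)) 1 0 * p =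
            (((m' : Matrix (Fin 2) (Fin 2) ℤ)) 0 0 - 1) * q := by
      by_cases hab : a = 0 ∧ b = 0
      · have hc0 : c ≠ 0 := fun h => hnz ⟨hab.1, hab.2, h⟩
        refine ⟨0, 1, 0, 1, by ring, fun m' hm' => ?_⟩
        obtain ⟨k1, k2, k3, k4⟩ := key m' hm'
        have e1 : c * ((m' : Matrix (Fin 2) (Fin 2) ℤ)) 0 1 = 0 := by
          rw [← k4, hab.2]; ring
        have e2 : (((m' : Matrix (Fin 2) (Fin 2) ℤ)) 0 0 - 1) * c = 0 := by
          rw [← k2, hab.1]; ring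
        have f1 : ((m' : Matrix (Fin 2) (Fin 2) ℤ)) 0 1 = 0 :=
          (mul_eq_zero.1 e1).resolve_left hc0
        have f2 : ((m' : Matrix (Fin 2) (Fin 2) ℤ)) 0 0 - 1 = 0 :=
          (mul_eq_zero.1 e2).resolve_right hc0
        constructor
        · rw [f1]; ring
        · rw [f2]; ring
      · -- (b, -a) nonzero; primitivize
        have hg0 : 0 < Int.gcd b a := by
          rcases not_and_or.mp hab with h | h
          · exact Int.gcd_pos_iff.2 (Or.inr h)
          · exact Int.gcd_pos_iff.2 (Or.inl h)
        set g : ℤ := (Int.gcd b a : ℤ) with hgdef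
        have hgne : g ≠ 0 := by rw [hgdef]; exact_mod_cast hg0.ne'
        have hgb : g * (b / g) = b := Int.mul_ediv_cancel' (Int.gcd_dvd_left b a)
        have hga : g * (a / g) = a := Int.mul_ediv_cancel' (Int.gcd_dvd_right b a)
        have hcop : IsCoprime (b / g) (-(a / g)) := by
          rw [IsCoprime.neg_right_iff]
          rw [Int.isCoprime_iff_gcd_eq_one]
          exact Int.gcd_div_gcd_div_gcd hg0
        obtain ⟨u, v, huv⟩ := hcop
        refine ⟨b / g, -(a / g), u, v, by linear_combination huv, fun m' hm' => ?_⟩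
        obtain ⟨k1, k2, k3, k4⟩ := key m' hm'
        constructor
        · have hg : g * ((((m' : Matrix (Fin 2) (Fin 2) ℤ)) 0 0 - 1) * (b / g) +
              ((m' : Matrix (Fin 2) (Fin 2) ℤ)) 0 1 * (-(a / g))) = 0 := by
            linear_combination (((m' : Matrix (Fin 2) (Fin 2) ℤ)) 0 0 - 1) * hgb -
              ((m' : Matrix (Fin 2) (Fin 2) ℤ)) 0 1 * hga - k1
          exact (mul_eq_zero.1 hg).resolve_left hgne
        · have hg : g * (((m' : Matrix (Fin 2) (Fin 2) ℤ)) 1 0 * (b / g) -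
              (((m' : Matrix (Fin 2) (Fin 2) ℤ)) 0 0 - 1) * (-(a / g))) = 0 := by
            linear_combination ((m' : Matrix (Fin 2) (Fin 2) ℤ)) 1 0 * hgb +
              (((m' : Matrix (Fin 2) (Fin 2) ℤ)) 0 0 - 1) * hga + k3
          have := (mul_eq_zero.1 hg).resolve_left hgne
          linarith [this]
    -- build the conjugating matrix
    have hdet' : (!![p, -s; q, r] : Matrix (Fin 2) (Fin 2) ℤ).det = 1 := by
      rw [Matrix.det_fin_two_of]; linarith [hdet]
    set G : Matrix.SpecialLinearGroup (Fin 2) ℤ := ⟨!![p, -s; q, r], hdet'⟩ with hG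
    refine ⟨G⁻¹, fun m' hm' => ?_⟩
    obtain ⟨k1', k2'⟩ := hker m' hm'
    obtain ⟨hd', -⟩ := struct m' hm'
    have hco : ((G⁻¹ * m' * G⁻¹⁻¹ : Matrix.SpecialLinearGroup (Fin 2) ℤ) :
        Matrix (Fin 2) (Fin 2) ℤ) =
        !![r, s; -q, p] * ((m' : Matrix (Fin 2) (Fin 2) ℤ) * !![p, -s; q, r]) := by
      rw [inv_inv, Matrix.SpecialLinearGroup.coe_mul, Matrix.SpecialLinearGroup.coe_mul,
        Matrix.SpecialLinearGroup.coe_inv, hG]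
      show (!![p, -s; q, r] : Matrix (Fin 2) (Fin 2) ℤ).adjugate * _ * _ = _
      rw [Matrix.adjugate_fin_two_of, neg_neg, mul_assoc]
    refine ⟨(!![r, s; -q, p] * ((m' : Matrix (Fin 2) (Fin 2) ℤ) * !![p, -s; q, r])) 0 1, ?_⟩
    rw [hco]
    ext i j
    fin_cases i <;> fin_cases j <;>
      simp [Matrix.mul_apply, Fin.sum_univ_two]
    · linear_combination s * q * hd' + hdet + r * k1' + s * k2'
    · linear_combination p * q * hd' + p * k2' - q * k1'
    · linear_combination p * r * hd' + hdet - r * k1' - s * k2'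
end
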